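/- arXiv:1111.5473 — 9 statements merged into one kernel-verified Lean document; each statement's English description precedes it below -/
import Mathlib

section
/- Let y ∈ Las_t(K) and let I ⊆ [n] with |I| ≤ t. If K ∩ {x ∈ ℝ^n : x_i = 1 for all i ∈ I} = ∅, then y_I = 0. -/
open Finset

/-- Membership in the polyhedron `K = {x : A x ≥ b}`. -/
def memK {n m : ℕ} (A : Matrix (Fin m) (Fin n) ℝ) (b : Fin m → ℝ) (x : Fin n → ℝ) : Prop :=
  ∀ ℓ : Fin m, b ℓ ≤ ∑ i, A ℓ i * x i

/-- The moment matrix of a vector `y` indexed by subsets, truncated at sets of size `≤ t`. -/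
def momentMatrix {α : Type*} [Fintype α] [DecidableEq α] (y : Finset α → ℝ) (t : ℕ) :
    Matrix {I : Finset α // I.card ≤ t} {I : Finset α // I.card ≤ t} ℝ :=
  fun I J => y (I.1 ∪ J.1)

/-- The shift operator `(a;β) * y` for a linear constraint `aᵀx ≥ β`. -/
def shiftVec {α ι : Type*} [Fintype α] [DecidableEq α]
    (A : ι → α → ℝ) (b : ι → ℝ) (ℓ : ι) (y : Finset α → ℝ) : Finset α → ℝ :=
  fun I => (∑ i, A ℓ i * y (insert i I)) - b ℓ * y I

/-- `y ∈ Las_t(K)` where `K = {x : A x ≥ b}`: `y_∅ = 1`, the moment matrix truncated at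
sets of size `≤ t+1` is PSD, and each shifted moment matrix truncated at sets of size
`≤ t` is PSD. -/
def IsLasserre {α ι : Type*} [Fintype α] [DecidableEq α]
    (A : ι → α → ℝ) (b : ι → ℝ) (t : ℕ) (y : Finset α → ℝ) : Prop :=
  y ∅ = 1 ∧ (momentMatrix y (t + 1)).PosSemidef ∧
    ∀ ℓ : ι, (momentMatrix (shiftVec A b ℓ y) t).PosSemidef

lemma psd_diag_nonneg {k : Type*} [Fintype k] [DecidableEq k] {M : Matrix k k ℝ}
    (h : M.PosSemidef) (i : k) : 0 ≤ M i i := by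
  have := h.2 (Finsupp.single i 1)
  simpa [Finsupp.sum_single_index] using this

/-- If `y ∈ Las_t(K)`, `|I| ≤ t` and `K ∩ {x : x_i = 1 ∀ i ∈ I} = ∅`, then `y_I = 0`. -/
theorem lasserre_infeasible_zero (n m t : ℕ) (A : Matrix (Fin m) (Fin n) ℝ) (b : Fin m → ℝ)
    (y : Finset (Fin n) → ℝ) (hy : IsLasserre (fun ℓ i => A ℓ i) b t y)
    (I : Finset (Fin n)) (hI : I.card ≤ t)
    (hK : ¬ ∃ x : Fin n → ℝ, memK A b x ∧ ∀ i ∈ I, x i = 1) :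
    y I = 0 := by
  obtain ⟨-, hM, hS⟩ := hy
  have h0 : 0 ≤ y I := by
    have := psd_diag_nonneg hM ⟨I, hI.trans (Nat.le_succ t)⟩
    simpa [momentMatrix] using this
  rcases h0.lt_or_eq with hpos | heq
  · exfalso
    apply hK
    refine ⟨fun j => y (insert j I) / y I, ?_, ?_⟩
    · intro ℓ
      have hd : 0 ≤ shiftVec (fun ℓ i => A ℓ i) b ℓ y I := by
        have := psd_diag_nonneg (hS ℓ) ⟨I, hI⟩
        simpa [momentMatrix] using this
      have h1 : b ℓ * y I ≤ ∑ i, A ℓ i * y (insert i I) := by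
        simpa only [shiftVec, sub_nonneg] using hd
      calc b ℓ = b ℓ * y I / y I := by field_simp
        _ ≤ (∑ i, A ℓ i * y (insert i I)) / y I := by gcongr
        _ = ∑ i, A ℓ i * (y (insert i I) / y I) := by
            rw [Finset.sum_div]; exact Finset.sum_congr rfl (fun i _ => (mul_div_assoc _ _ _))
    · intro i hi
      show y (insert i I) / y I = 1
      rw [Finset.insert_eq_self.mpr hi, div_self hpos.ne']
  · exact heq.symm
end

section
/- Let y ∈ Las_t(K) and S ⊆ [n] with |S| ≤ t. Then there exist finitely many vectors z^{(1)}, …, z^{(N)} ∈ Las_{t−|S|}(K) with z^{(j)}_{\{i\}} ∈ {0,1} for all i ∈ S and all j, and coefficients λ_1, …, λ_N ≥ 0 with Σ_j λ_j = 1, such that y_J = Σ_j λ_j · z^{(j)}_J for every subset J ⊆ [n] with |J| ≤ 2(t−|S|)+2. (Local consistency: the truncation of y is a convex combination of level-(t−|S|) Lasserre solutions that are integral on S.) -/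
open Finset

set_option linter.unusedSectionVars false
set_option linter.unnecessarySimpa false
set_option maxHeartbeats 1000000

section PSDaux

variable {A B : Type*} [Fintype A] [Fintype B] [DecidableEq A] [DecidableEq B]

private lemma sum_two_ite (c d : ℝ) (x y : A) (v : A → ℝ) :
    ∑ a : A, (c * (if a = x then (1:ℝ) else 0) + d * (if a = y then 1 else 0)) * v a
      = c * v x + d * v y := by
  simp [add_mul, ite_mul, Finset.sum_add_distrib]

lemma psd_congr_aux {M : Matrix A A ℝ} (hM : M.PosSemidef) (f g : B → A) (c d : ℝ) :
    (Matrix.of fun p q : B =>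
      c * (c * M (f p) (f q) + d * M (f p) (g q)) +
      d * (c * M (g p) (f q) + d * M (g p) (g q))).PosSemidef := by
  set Q : Matrix A B ℝ :=
    Matrix.of fun a p => c * (if a = f p then (1:ℝ) else 0) + d * (if a = g p then 1 else 0) with hQ
  have key := hM.conjTranspose_mul_mul_same Q
  have eq : Q.conjTranspose * M * Q = Matrix.of fun p q : B =>
      c * (c * M (f p) (f q) + d * M (f p) (g q)) +
      d * (c * M (g p) (f q) + d * M (g p) (g q)) := by
    ext p q
    simp only [Matrix.mul_apply, Matrix.conjTranspose_apply, Matrix.of_apply, star_trivial, hQ]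
    have step1 : ∀ a' : A,
        (∑ a : A, (c * (if a = f p then (1:ℝ) else 0) + d * (if a = g p then 1 else 0)) * M a a')
        = c * M (f p) a' + d * M (g p) a' := fun a' => sum_two_ite c d _ _ (fun a => M a a')
    calc ∑ a' : A, (∑ a : A, (c * (if a = f p then (1:ℝ) else 0) + d * (if a = g p then 1 else 0)) * M a a') * (c * (if a' = f q then (1:ℝ) else 0) + d * (if a' = g q then 1 else 0))
        = ∑ a' : A, (c * (if a' = f q then (1:ℝ) else 0) + d * (if a' = g q then 1 else 0)) * (c * M (f p) a' + d * M (g p) a') := by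
          refine Finset.sum_congr rfl fun a' _ => ?_
          rw [step1 a', mul_comm]
      _ = c * (c * M (f p) (f q) + d * M (g p) (f q)) + d * (c * M (f p) (g q) + d * M (g p) (g q)) := sum_two_ite c d _ _ _
      _ = _ := by ring
  rw [← eq]; exact key

lemma psd_pull {M : Matrix A A ℝ} (hM : M.PosSemidef) (f : B → A) :
    (Matrix.of fun p q : B => M (f p) (f q)).PosSemidef := by
  have := psd_congr_aux hM f f 1 0
  convert this using 2 with p q
  funext p q
  ring

lemma psd_diff {M : Matrix A A ℝ} (hM : M.PosSemidef) (f g : B → A) :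
    (Matrix.of fun p q : B =>
      M (f p) (f q) - M (f p) (g q) - M (g p) (f q) + M (g p) (g q)).PosSemidef := by
  have := psd_congr_aux hM f g 1 (-1)
  convert this using 2 with p q
  funext p q
  ring

lemma psd_smul {M : Matrix A A ℝ} (hM : M.PosSemidef) {c : ℝ} (hc : 0 ≤ c) :
    (c • M).PosSemidef := by
  refine Matrix.PosSemidef.of_dotProduct_mulVec_nonneg ?_ fun x => ?_
  · unfold Matrix.IsHermitian
    rw [Matrix.conjTranspose_smul, hM.1.eq]
    simp
  · have := hM.dotProduct_mulVec_nonneg x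
    simp only [Matrix.smul_mulVec, dotProduct_smul, smul_eq_mul]
    exact mul_nonneg hc this

end PSDaux
section PSDaux2
variable {A : Type*} [Fintype A] [DecidableEq A]


lemma psd_quad {M : Matrix A A ℝ} (hM : M.PosSemidef) (a b : A) (hab : a ≠ b) (r s : ℝ) :
    0 ≤ r^2 * M a a + r*s*(M a b + M b a) + s^2 * M b b := by
  have h := hM.dotProduct_mulVec_nonneg (fun k => if k = a then r else if k = b then s else 0)
  have hv : ∀ k, Matrix.mulVec M (fun k => if k = a then r else if k = b then s else 0) k
      = M k a * r + M k b * s := by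
    intro k
    simp only [Matrix.mulVec, dotProduct]
    rw [Finset.sum_eq_add_of_mem a b (Finset.mem_univ a) (Finset.mem_univ b) hab] <;>
      simp +contextual [hab, Ne.symm hab]
  have hd : dotProduct (star (fun k => if k = a then r else if k = b then s else 0))
      (Matrix.mulVec M (fun k => if k = a then r else if k = b then s else 0))
      = r^2 * M a a + r*s*(M a b + M b a) + s^2 * M b b := by
    simp only [dotProduct, Pi.star_apply, star_trivial]
    rw [Finset.sum_eq_add_of_mem a b (Finset.mem_univ a) (Finset.mem_univ b) hab]
    · rw [hv a, hv b]; simp [hab, Ne.symm hab]; ring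
    · intro c _ hc
      simp [hc.1, hc.2]
  rw [hd] at h
  exact h

lemma psd_row_zero {M : Matrix A A ℝ} (hM : M.PosSemidef) (a b : A) (ha : M a a = 0) :
    M a b = 0 := by
  rcases eq_or_ne a b with rfl | hab
  · exact ha
  have hsym : M b a = M a b := by
    have := hM.1.apply b a
    simpa using this.symm
  by_contra hne
  have h := psd_quad hM a b hab (-(M b b + 1)/(2 * M a b)) 1
  rw [ha, hsym] at h
  have h2 : (2 : ℝ) * M a b ≠ 0 := mul_ne_zero two_ne_zero hne
  have : -(M b b + 1)/(2 * M a b) * 1 * (M a b + M a b) = -(M b b + 1) := by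
    rw [mul_one, show M a b + M a b = 2 * M a b by ring, div_mul_cancel₀ _ h2]
  nlinarith [h]

end PSDaux2
section Maux
variable {α : Type*} [Fintype α] [DecidableEq α] {y w : Finset α → ℝ} {t s : ℕ}

lemma momentMatrix_insert_psd (h : (momentMatrix y (t+1)).PosSemidef) (i : α) :
    (momentMatrix (fun I => y (insert i I)) t).PosSemidef := by
  have key := psd_pull h (fun I : {I : Finset α // I.card ≤ t} =>
    (⟨insert i I.1, le_trans (Finset.card_insert_le _ _) (Nat.succ_le_succ I.2)⟩ :
      {I : Finset α // I.card ≤ t+1}))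
  have eq : momentMatrix (fun I => y (insert i I)) t = Matrix.of fun p q : {I : Finset α // I.card ≤ t} =>
      momentMatrix y (t+1) ⟨insert i p.1, le_trans (Finset.card_insert_le _ _) (Nat.succ_le_succ p.2)⟩
        ⟨insert i q.1, le_trans (Finset.card_insert_le _ _) (Nat.succ_le_succ q.2)⟩ := by
    ext p q
    simp [momentMatrix, Finset.insert_union, Finset.union_insert, Finset.insert_idem]
  rw [eq]; exact key

lemma momentMatrix_diff_psd (h : (momentMatrix y (t+1)).PosSemidef) (i : α) :
    (momentMatrix (fun I => y I - y (insert i I)) t).PosSemidef := by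
  have key := psd_diff h
    (fun I : {I : Finset α // I.card ≤ t} =>
      (⟨I.1, le_trans I.2 (Nat.le_succ t)⟩ : {I : Finset α // I.card ≤ t+1}))
    (fun I => ⟨insert i I.1, le_trans (Finset.card_insert_le _ _) (Nat.succ_le_succ I.2)⟩)
  have eq : momentMatrix (fun I => y I - y (insert i I)) t = Matrix.of
      fun p q : {I : Finset α // I.card ≤ t} =>
        y (p.1 ∪ q.1) - y (p.1 ∪ insert i q.1) - y (insert i p.1 ∪ q.1)
          + y (insert i p.1 ∪ insert i q.1) := by
    ext p q
    simp only [momentMatrix, Matrix.of_apply, Finset.insert_union, Finset.union_insert,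
      Finset.insert_idem]
    ring
  rw [eq]; exact key

lemma momentMatrix_smul_psd {c : ℝ} (hc : 0 ≤ c) (h : (momentMatrix y t).PosSemidef) :
    (momentMatrix (fun I => c * y I) t).PosSemidef := by
  have : momentMatrix (fun I => c * y I) t = c • momentMatrix y t := by
    ext p q; simp [momentMatrix]
  rw [this]; exact psd_smul h hc

-- splitting
lemma finset_split (K : Finset α) (s₁ s₂ : ℕ) (h : K.card ≤ s₁ + s₂) :
    ∃ K₁ K₂ : Finset α, K₁ ∪ K₂ = K ∧ K₁.card ≤ s₁ ∧ K₂.card ≤ s₂ := by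
  obtain ⟨K₁, hsub, hcard⟩ := Finset.exists_subset_card_eq (min_le_right s₁ K.card :
    min s₁ K.card ≤ K.card)
  refine ⟨K₁, K \ K₁, Finset.union_sdiff_of_subset hsub, ?_, ?_⟩
  · rw [hcard]; exact min_le_left _ _
  · rw [Finset.card_sdiff_of_subset hsub, hcard]
    omega

lemma finset_split_mem {K : Finset α} {i : α} (hi : i ∈ K) (s₁ s₂ : ℕ) (hs : 1 ≤ s₁)
    (h : K.card ≤ s₁ + s₂) :
    ∃ K₁ K₂ : Finset α, K₁ ∪ K₂ = K ∧ i ∈ K₁ ∧ K₁.card ≤ s₁ ∧ K₂.card ≤ s₂ := by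
  obtain ⟨K₁, K₂, hu, h1, h2⟩ := finset_split (K.erase i) (s₁ - 1) s₂ (by
    have := Finset.card_erase_of_mem hi; omega)
  refine ⟨insert i K₁, K₂, ?_, Finset.mem_insert_self _ _, ?_, h2⟩
  · rw [Finset.insert_union, hu, Finset.insert_erase hi]
  · calc (insert i K₁).card ≤ K₁.card + 1 := Finset.card_insert_le _ _
      _ ≤ s₁ := by omega

lemma moment_row_zero (hM : (momentMatrix w s).PosSemidef) {I : Finset α} (hI : I.card ≤ s)
    (h0 : w I = 0) {J : Finset α} (hJ : J.card ≤ s) : w (I ∪ J) = 0 := by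
  have := psd_row_zero hM ⟨I, hI⟩ ⟨J, hJ⟩ (by simpa [momentMatrix] using h0)
  simpa [momentMatrix] using this

/-- if `w {i} = 0`, all `w K` with `i ∈ K`, `|K| ≤ 2s` vanish. -/
lemma vanish_of_single (hM : (momentMatrix w s).PosSemidef) {i : α} (h0 : w {i} = 0)
    (hs : 1 ≤ s) {K : Finset α} (hiK : i ∈ K) (hK : K.card ≤ 2 * s) : w K = 0 := by
  obtain ⟨K₁, K₂, hu, hi1, h1, h2⟩ := finset_split_mem hiK s s hs (by omega)
  have step1 : w K₁ = 0 := by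
    have : w ({i} ∪ K₁.erase i) = 0 := by
      refine moment_row_zero hM (by simpa using hs) h0 ?_
      exact le_trans (Finset.card_le_card (Finset.erase_subset _ _)) h1
    rwa [show ({i} : Finset α) ∪ K₁.erase i = insert i (K₁.erase i) from rfl, Finset.insert_erase hi1] at this
  rw [← hu]
  exact moment_row_zero hM h1 step1 h2

/-- if `w ∅ = 0`, all `w K` with `|K| ≤ 2s` vanish. -/
lemma vanish_of_empty (hM : (momentMatrix w s).PosSemidef) (h0 : w ∅ = 0)
    {K : Finset α} (hK : K.card ≤ 2 * s) : w K = 0 := by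
  obtain ⟨K₁, K₂, hu, h1, h2⟩ := finset_split K s s (by omega)
  have step1 : w K₁ = 0 := by
    have := moment_row_zero hM (show (∅ : Finset α).card ≤ s by simp) h0 h1
    rwa [Finset.empty_union] at this
  rw [← hu]
  exact moment_row_zero hM h1 step1 h2

/-- bounds on singletons for Lasserre solutions -/
lemma las_single_bounds {ι : Type*} {A : ι → α → ℝ} {b : ι → ℝ}
    (hy : IsLasserre A b t y) (i : α) : 0 ≤ y {i} ∧ y {i} ≤ 1 := by
  obtain ⟨hE, hM, -⟩ := hy
  have hne : (⟨(∅ : Finset α), by simp⟩ : {I : Finset α // I.card ≤ t+1}) ≠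
      ⟨{i}, by simpa using Nat.succ_le_succ (Nat.zero_le t)⟩ := by
    simp only [ne_eq, Subtype.mk.injEq]
    exact fun h => (Finset.singleton_ne_empty i) (congrArg Subtype.val h).symm
  have q1 := psd_quad hM _ _ hne (y {i}) (-1)
  have q0 := psd_quad hM _ _ hne 0 1
  simp only [momentMatrix, Finset.empty_union, Finset.union_self, Finset.union_empty, hE] at q1 q0
  constructor
  · nlinarith
  · nlinarith

end Maux
section Las
variable {α ι : Type*} [Fintype α] [DecidableEq α] {A : ι → α → ℝ} {b : ι → ℝ} {u : ℕ}
  {y : Finset α → ℝ}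

lemma shiftVec_cond1 (i : α) (c : ℝ) (ℓ : ι) :
    shiftVec A b ℓ (fun I => c * y (insert i I)) =
      fun I => c * shiftVec A b ℓ y (insert i I) := by
  funext I
  simp only [shiftVec, mul_sub, Finset.mul_sum]
  refine congrArg₂ Sub.sub (Finset.sum_congr rfl fun _ _ => by rw [Finset.insert_comm]; ring) (by ring)

lemma shiftVec_cond0 (i : α) (c : ℝ) (ℓ : ι) :
    shiftVec A b ℓ (fun I => c * (y I - y (insert i I))) =
      fun I => c * (shiftVec A b ℓ y I - shiftVec A b ℓ y (insert i I)) := by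
  funext I
  simp only [shiftVec]
  have h : ∀ i' ∈ Finset.univ (α := α),
      A ℓ i' * (c * (y (insert i' I) - y (insert i (insert i' I))))
        = c * (A ℓ i' * y (insert i' I)) - c * (A ℓ i' * y (insert i' (insert i I))) := by
    intro i' _
    rw [Finset.insert_comm]
    ring
  rw [Finset.sum_congr rfl h, Finset.sum_sub_distrib, ← Finset.mul_sum, ← Finset.mul_sum]
  ring

lemma isLasserre_cond1 (hy : IsLasserre A b (u+1) y) (i : α) (hc : 0 < y {i}) :
    IsLasserre A b u (fun I => (y {i})⁻¹ * y (insert i I)) := by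
  obtain ⟨hE, hM, hS⟩ := hy
  refine ⟨by simpa using inv_mul_cancel₀ (ne_of_gt hc), ?_, fun ℓ => ?_⟩
  · exact momentMatrix_smul_psd (inv_nonneg.mpr hc.le) (momentMatrix_insert_psd hM i)
  · rw [shiftVec_cond1]
    exact momentMatrix_smul_psd (inv_nonneg.mpr hc.le) (momentMatrix_insert_psd (hS ℓ) i)

lemma isLasserre_cond0 (hy : IsLasserre A b (u+1) y) (i : α) (hc : y {i} < 1) :
    IsLasserre A b u (fun I => (1 - y {i})⁻¹ * (y I - y (insert i I))) := by
  obtain ⟨hE, hM, hS⟩ := hy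
  have hpos : (0:ℝ) < 1 - y {i} := by linarith
  refine ⟨?_, ?_, fun ℓ => ?_⟩
  · show (1 - y {i})⁻¹ * (y ∅ - y (insert i ∅)) = 1
    rw [show insert i (∅ : Finset α) = {i} from rfl, hE]
    exact inv_mul_cancel₀ (ne_of_gt hpos)
  · exact momentMatrix_smul_psd (inv_nonneg.mpr hpos.le) (momentMatrix_diff_psd hM i)
  · rw [shiftVec_cond0]
    exact momentMatrix_smul_psd (inv_nonneg.mpr hpos.le) (momentMatrix_diff_psd (hS ℓ) i)

lemma convex_extreme {N : ℕ} {lam v : Fin N → ℝ} (hl : ∀ j, 0 ≤ lam j) (hs : ∑ j, lam j = 1)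
    (hv0 : ∀ j, 0 ≤ v j) (hv1 : ∀ j, v j ≤ 1) {a : ℝ} (ha : ∑ j, lam j * v j = a)
    (hint : a = 0 ∨ a = 1) : ∀ j, lam j ≠ 0 → v j = 0 ∨ v j = 1 := by
  intro j hj
  rcases hint with rfl | rfl
  · left
    have := (Finset.sum_eq_zero_iff_of_nonneg
      (fun k _ => mul_nonneg (hl k) (hv0 k))).mp ha j (Finset.mem_univ j)
    rcases mul_eq_zero.mp this with h | h
    · exact absurd h hj
    · exact h
  · right
    have hz : ∑ k, lam k * (1 - v k) = 0 := by
      have : ∀ k ∈ Finset.univ (α := Fin N), lam k * (1 - v k) = lam k - lam k * v k :=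
        fun k _ => by ring
      rw [Finset.sum_congr rfl this, Finset.sum_sub_distrib, hs, ha, sub_self]
    have := (Finset.sum_eq_zero_iff_of_nonneg
      (fun k _ => mul_nonneg (hl k) (by linarith [hv1 k]))).mp hz j (Finset.mem_univ j)
    rcases mul_eq_zero.mp this with h | h
    · exact absurd h hj
    · linarith

end Las
lemma lasserre_decomp {α ι : Type*} [Fintype α] [DecidableEq α] (A : ι → α → ℝ) (b : ι → ℝ) :
    ∀ (s t : ℕ) (y : Finset α → ℝ) (S : Finset α),
      IsLasserre A b t y → S.card = s → s ≤ t →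
      ∃ (N : ℕ) (lam : Fin N → ℝ) (z : Fin N → Finset α → ℝ),
        (∀ j, IsLasserre A b (t - s) (z j)) ∧
        (∀ j, lam j ≠ 0 → ∀ i ∈ S, z j {i} = 0 ∨ z j {i} = 1) ∧
        (∀ j, 0 ≤ lam j) ∧ (∑ j, lam j = 1) ∧
        (∀ J : Finset α, J.card ≤ 2*(t-s)+2 → y J = ∑ j, lam j * z j J) := by
  intro s
  induction s with
  | zero =>
    intro t y S hy hcard hst
    refine ⟨1, fun _ => 1, fun _ => y, by simpa using hy, ?_, by simp, by simp, by simp⟩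
    intro j _ i hi
    rw [Finset.card_eq_zero.mp hcard] at hi
    exact absurd hi (Finset.notMem_empty i)
  | succ s ih =>
    intro t y S hy hcard hst
    obtain ⟨u, rfl⟩ : ∃ u, t = u + 1 := ⟨t - 1, by omega⟩
    have hts : u + 1 - (s + 1) = u - s := by omega
    have hSne : S.Nonempty := by rw [← Finset.card_pos, hcard]; omega
    obtain ⟨i, hiS⟩ := hSne
    have hcard' : (S.erase i).card = s := by rw [Finset.card_erase_of_mem hiS, hcard]; omega
    have hsu : s ≤ u := by omega
    have hb := las_single_bounds hy i
    have hJbound : ∀ J : Finset α, J.card ≤ 2*(u-s)+2 → J.card ≤ 2*(u+1-(s+1))+2 := by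
      intro J h; omega
    -- helper to upgrade a decomposition of ŷ with ŷ{i} ∈ {0,1}
    have key : ∀ (c₁ c₀ : ℝ) (Y₁ Y₀ : Finset α → ℝ),
        0 ≤ c₁ → 0 ≤ c₀ → c₁ + c₀ = 1 →
        IsLasserre A b u Y₁ → IsLasserre A b u Y₀ →
        (Y₁ {i} = 0 ∨ Y₁ {i} = 1) → (Y₀ {i} = 0 ∨ Y₀ {i} = 1) →
        (∀ J : Finset α, J.card ≤ 2*(u-s)+2 → y J = c₁ * Y₁ J + c₀ * Y₀ J) →
        ∃ (N : ℕ) (lam : Fin N → ℝ) (z : Fin N → Finset α → ℝ),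
          (∀ j, IsLasserre A b (u+1-(s+1)) (z j)) ∧
          (∀ j, lam j ≠ 0 → ∀ i' ∈ S, z j {i'} = 0 ∨ z j {i'} = 1) ∧
          (∀ j, 0 ≤ lam j) ∧ (∑ j, lam j = 1) ∧
          (∀ J : Finset α, J.card ≤ 2*(u+1-(s+1))+2 → y J = ∑ j, lam j * z j J) := by
      intro c₁ c₀ Y₁ Y₀ hc₁ hc₀ hcs hL₁ hL₀ hi₁ hi₀ hYdec
      obtain ⟨N₁, lam₁, z₁, hz₁, hzint₁, hl₁, hs₁, hdec₁⟩ :=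
        ih u Y₁ (S.erase i) hL₁ hcard' hsu
      obtain ⟨N₀, lam₀, z₀, hz₀, hzint₀, hl₀, hs₀, hdec₀⟩ :=
        ih u Y₀ (S.erase i) hL₀ hcard' hsu
      have hone : (1 : ℕ) ≤ 2*(u-s)+2 := by omega
      -- integrality at i for each family
      have hi1' : ∀ j, lam₁ j ≠ 0 → z₁ j {i} = 0 ∨ z₁ j {i} = 1 := by
        exact convex_extreme (a := Y₁ {i}) hl₁ hs₁ (fun j => (las_single_bounds (hz₁ j) i).1)
          (fun j => (las_single_bounds (hz₁ j) i).2) (hdec₁ {i} (by simpa using hone)).symm hi₁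
      have hi0' : ∀ j, lam₀ j ≠ 0 → z₀ j {i} = 0 ∨ z₀ j {i} = 1 := by
        exact convex_extreme (a := Y₀ {i}) hl₀ hs₀ (fun j => (las_single_bounds (hz₀ j) i).1)
          (fun j => (las_single_bounds (hz₀ j) i).2) (hdec₀ {i} (by simpa using hone)).symm hi₀
      refine ⟨N₁ + N₀, Fin.append (fun j => c₁ * lam₁ j) (fun j => c₀ * lam₀ j),
        Fin.append z₁ z₀, ?_, ?_, ?_, ?_, ?_⟩
      · intro j
        refine Fin.addCases (fun j₁ => ?_) (fun j₀ => ?_) j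
        · rw [Fin.append_left, hts]; exact hz₁ j₁
        · rw [Fin.append_right, hts]; exact hz₀ j₀
      · intro j
        refine Fin.addCases (fun j₁ => ?_) (fun j₀ => ?_) j
        · rw [Fin.append_left, Fin.append_left]
          intro hne i' hi'
          have hlam : lam₁ j₁ ≠ 0 := fun h => hne (by rw [h, mul_zero])
          rcases eq_or_ne i' i with rfl | hii
          · exact hi1' j₁ hlam
          · exact hzint₁ j₁ hlam i' (Finset.mem_erase.mpr ⟨hii, hi'⟩)
        · rw [Fin.append_right, Fin.append_right]
          intro hne i' hi'
          have hlam : lam₀ j₀ ≠ 0 := fun h => hne (by rw [h, mul_zero])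
          rcases eq_or_ne i' i with rfl | hii
          · exact hi0' j₀ hlam
          · exact hzint₀ j₀ hlam i' (Finset.mem_erase.mpr ⟨hii, hi'⟩)
      · intro j
        refine Fin.addCases (fun j₁ => ?_) (fun j₀ => ?_) j
        · rw [Fin.append_left]; exact mul_nonneg hc₁ (hl₁ j₁)
        · rw [Fin.append_right]; exact mul_nonneg hc₀ (hl₀ j₀)
      · rw [Fin.sum_univ_add]
        simp only [Fin.append_left, Fin.append_right]
        rw [← Finset.mul_sum, ← Finset.mul_sum, hs₁, hs₀, mul_one, mul_one, hcs]
      · intro J hJ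
        rw [hts] at hJ
        rw [hYdec J hJ, hdec₁ J hJ, hdec₀ J hJ, Fin.sum_univ_add]
        simp only [Fin.append_left, Fin.append_right]
        rw [Finset.mul_sum, Finset.mul_sum]
        refine congrArg₂ (· + ·) ?_ ?_ <;> exact Finset.sum_congr rfl fun j _ => by ring
    -- now case on y {i}
    have hins : insert i ({i} : Finset α) = {i} := by simp
    rcases eq_or_lt_of_le hb.1 with h0 | h0
    · -- y {i} = 0 : only branch 0
      have hY0 : IsLasserre A b u (fun I => (1 - y {i})⁻¹ * (y I - y (insert i I))) :=
        isLasserre_cond0 hy i (by rw [← h0]; norm_num)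
      refine key 0 1 (fun I => (1 - y {i})⁻¹ * (y I - y (insert i I)))
        (fun I => (1 - y {i})⁻¹ * (y I - y (insert i I))) le_rfl zero_le_one (by ring)
        hY0 hY0 ?_ ?_ ?_
      · left
        show (1 - y {i})⁻¹ * (y {i} - y (insert i {i})) = 0
        rw [hins]; ring
      · left
        show (1 - y {i})⁻¹ * (y {i} - y (insert i {i})) = 0
        rw [hins]; ring
      · intro J hJ
        have hvan : y (insert i J) = 0 := by
          refine vanish_of_single hy.2.1 (h0.symm ▸ rfl) (by omega) (Finset.mem_insert_self i J) ?_
          calc (insert i J).card ≤ J.card + 1 := Finset.card_insert_le _ _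
            _ ≤ 2 * (u + 1 + 1) := by omega
        rw [← h0]
        simp only [sub_zero, inv_one, hvan]
        ring
    rcases eq_or_lt_of_le hb.2 with h1 | h1
    · -- y {i} = 1 : only branch 1
      have hY1 : IsLasserre A b u (fun I => (y {i})⁻¹ * y (insert i I)) :=
        isLasserre_cond1 hy i h0
      refine key 1 0 (fun I => (y {i})⁻¹ * y (insert i I))
        (fun I => (y {i})⁻¹ * y (insert i I)) zero_le_one le_rfl (by ring)
        hY1 hY1 ?_ ?_ ?_
      · right
        show (y {i})⁻¹ * y (insert i {i}) = 1
        rw [hins]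
        exact inv_mul_cancel₀ (ne_of_gt h0)
      · right
        show (y {i})⁻¹ * y (insert i {i}) = 1
        rw [hins]
        exact inv_mul_cancel₀ (ne_of_gt h0)
      · intro J hJ
        have hvan : y J - y (insert i J) = 0 := by
          refine vanish_of_empty (momentMatrix_diff_psd hy.2.1 i) ?_ ?_
          · simp only [show insert i (∅ : Finset α) = {i} from rfl, hy.1, h1, sub_self]
          · omega
        show y J = 1 * ((y {i})⁻¹ * y (insert i J)) + 0 * ((y {i})⁻¹ * y (insert i J))
        have hiJ : y (insert i J) = y J := by linarith [hvan]
        rw [h1, inv_one, hiJ]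
        ring
    · -- 0 < y {i} < 1 : both branches
      have hY1 := isLasserre_cond1 hy i h0
      have hY0 := isLasserre_cond0 hy i h1
      refine key (y {i}) (1 - y {i}) _ _ hb.1 (by linarith) (by ring) hY1 hY0 ?_ ?_ ?_
      · right
        show (y {i})⁻¹ * y (insert i {i}) = 1
        rw [hins]
        exact inv_mul_cancel₀ (ne_of_gt h0)
      · left
        show (1 - y {i})⁻¹ * (y {i} - y (insert i {i})) = 0
        rw [hins]; ring
      · intro J hJ
        show y J = y {i} * ((y {i})⁻¹ * y (insert i J)) +
          (1 - y {i}) * ((1 - y {i})⁻¹ * (y J - y (insert i J)))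
        rw [← mul_assoc, ← mul_assoc, mul_inv_cancel₀ (ne_of_gt h0),
          mul_inv_cancel₀ (by linarith : (1:ℝ) - y {i} ≠ 0), one_mul, one_mul]
        ring
/-- Local consistency: if `y ∈ Las_t(K)` and `S ⊆ [n]` with `|S| ≤ t`, then the truncation
of `y` to sets of size `≤ 2(t-|S|)+2` is a convex combination of level-`(t-|S|)` Lasserre
solutions that are integral on `S`. -/
theorem lasserre_local_consistency (n m t : ℕ) (A : Matrix (Fin m) (Fin n) ℝ) (b : Fin m → ℝ)
    (y : Finset (Fin n) → ℝ) (hy : IsLasserre (fun ℓ i => A ℓ i) b t y)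
    (S : Finset (Fin n)) (hS : S.card ≤ t) :
    ∃ (N : ℕ) (lam : Fin N → ℝ) (z : Fin N → Finset (Fin n) → ℝ),
      (∀ j, IsLasserre (fun ℓ i => A ℓ i) b (t - S.card) (z j)) ∧
      (∀ j, ∀ i ∈ S, z j {i} = 0 ∨ z j {i} = 1) ∧
      (∀ j, 0 ≤ lam j) ∧ (∑ j, lam j = 1) ∧
      (∀ J : Finset (Fin n), J.card ≤ 2 * (t - S.card) + 2 →
        y J = ∑ j, lam j * z j J) := by
  obtain ⟨N, lam, z, hz, hzint, hl, hsum, hdec⟩ :=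
    lasserre_decomp (fun ℓ i => A ℓ i) b S.card t y S hy rfl hS
  have hex : ∃ j₀ : Fin N, lam j₀ ≠ 0 := by
    by_contra h
    push_neg at h
    rw [Finset.sum_eq_zero (fun j _ => h j)] at hsum
    exact zero_ne_one hsum
  obtain ⟨j₀, hj₀⟩ := hex
  refine ⟨N, lam, fun j => if lam j = 0 then z j₀ else z j, ?_, ?_, hl, hsum, ?_⟩
  · intro j
    by_cases h : lam j = 0 <;> simp only [h, if_true, if_false, if_pos, if_neg] <;>
      [exact hz j₀; exact hz j]
  · intro j i hi
    by_cases h : lam j = 0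
    · simp only [h, if_pos rfl]
      exact hzint j₀ hj₀ i hi
    · simp only [if_neg h]
      exact hzint j h i hi
  · intro J hJ
    rw [hdec J hJ]
    refine Finset.sum_congr rfl fun j _ => ?_
    simp only []
    by_cases h : lam j = 0
    · rw [h, zero_mul, zero_mul]
    · rw [if_neg h]
end

section
/- (Decomposition Theorem, feasibility form.) Let y ∈ Las_t(K), let S ⊆ [n] be a subset of variables, and let k < t be such that every I ⊆ S for which K ∩ {x : x_i = 1 for all i ∈ I} ≠ ∅ satisfies |I| ≤ k. Then there exist finitely many vectors z^{(1)}, …, z^{(N)} ∈ Las_{t−k}(K) with z^{(j)}_{\{i\}} ∈ {0,1} for all i ∈ S and all j, and coefficients λ_1, …, λ_N ≥ 0 with Σ_j λ_j = 1, such that y_J = Σ_j λ_j · z^{(j)}_J for every subset J with |J| ≤ 2(t−k)+2. -/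
open Finset

/-! ### Auxiliary combinatorial lemmas -/

lemma lasDecomp_sum_pair_vanish {α : Type*} [DecidableEq α] (T : Finset α) (a : α) (ha : a ∈ T)
    (F : Finset α → ℝ) (hF : ∀ V, F (insert a V) = F V) :
    ∑ V ∈ T.powerset, (-1 : ℝ) ^ V.card * F V = 0 := by
  have hT : T = insert a (T.erase a) := (insert_erase ha).symm
  rw [hT, Finset.sum_powerset_insert (notMem_erase a T)]
  have h2 : ∀ V ∈ (T.erase a).powerset,
      (-1 : ℝ) ^ (insert a V).card * F (insert a V) = -((-1 : ℝ) ^ V.card * F V) := by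
    intro V hV
    have haV : a ∉ V := fun h => (notMem_erase a T) (mem_powerset.1 hV h)
    rw [card_insert_of_notMem haV, hF, pow_succ]
    ring
  rw [Finset.sum_congr rfl h2]
  simp

lemma lasDecomp_gsum {α : Type*} [DecidableEq α] (T : Finset α) (F : Finset α → ℝ) :
    ∑ V ∈ T.powerset, ∑ W ∈ T.powerset,
        (-1 : ℝ) ^ V.card * (-1 : ℝ) ^ W.card * F (V ∪ W)
      = ∑ V ∈ T.powerset, (-1 : ℝ) ^ V.card * F V := by
  induction T using Finset.induction generalizing F with
  | empty => simp
  | @insert a T ha ih =>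
    rw [Finset.sum_powerset_insert ha, Finset.sum_powerset_insert ha, ← Finset.sum_add_distrib]
    have key : ∀ V ∈ T.powerset,
        ((∑ W ∈ (insert a T).powerset,
          (-1 : ℝ) ^ V.card * (-1 : ℝ) ^ W.card * F (V ∪ W))
        + ∑ W ∈ (insert a T).powerset,
          (-1 : ℝ) ^ (insert a V).card * (-1 : ℝ) ^ W.card * F (insert a V ∪ W))
        = ∑ W ∈ T.powerset,
            (-1 : ℝ) ^ V.card * (-1 : ℝ) ^ W.card * (F (V ∪ W) - F (insert a (V ∪ W))) := by
      intro V hV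
      have haV : a ∉ V := fun h => ha (mem_powerset.1 hV h)
      rw [Finset.sum_powerset_insert ha, Finset.sum_powerset_insert ha, add_add_add_comm,
        ← Finset.sum_add_distrib, ← Finset.sum_add_distrib, ← Finset.sum_add_distrib]
      apply Finset.sum_congr rfl
      intro W hW
      have haW : a ∉ W := fun h => ha (mem_powerset.1 hW h)
      have h1 : V ∪ insert a W = insert a (V ∪ W) := by rw [union_insert]
      have h2 : insert a V ∪ W = insert a (V ∪ W) := by rw [insert_union]
      have h3 : insert a V ∪ insert a W = insert a (V ∪ W) := by
        rw [insert_union, union_insert, insert_idem]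
      rw [h1, h2, h3, card_insert_of_notMem haV, card_insert_of_notMem haW, pow_succ]
      ring
    rw [Finset.sum_congr rfl key, ih (fun U => F U - F (insert a U))]
    have h4 : ∀ V ∈ T.powerset,
        (-1 : ℝ) ^ (insert a V).card * F (insert a V) = -((-1 : ℝ) ^ V.card * F (insert a V)) := by
      intro V hV
      have haV : a ∉ V := fun h => ha (mem_powerset.1 hV h)
      rw [card_insert_of_notMem haV, pow_succ]; ring
    rw [Finset.sum_congr rfl h4]
    rw [← Finset.sum_add_distrib]
    apply Finset.sum_congr rfl
    intro V _
    ring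

lemma lasDecomp_psum {α : Type*} [DecidableEq α] (T : Finset α) (F : Finset α → ℝ) :
    ∑ I ∈ T.powerset, ∑ V ∈ (T \ I).powerset, (-1 : ℝ) ^ V.card * F (I ∪ V) = F ∅ := by
  induction T using Finset.induction generalizing F with
  | empty => simp
  | @insert a T ha ih =>
    rw [Finset.sum_powerset_insert ha, ← Finset.sum_add_distrib]
    have key : ∀ I ∈ T.powerset,
        ((∑ V ∈ (insert a T \ I).powerset, (-1 : ℝ) ^ V.card * F (I ∪ V))
        + ∑ V ∈ (insert a T \ insert a I).powerset, (-1 : ℝ) ^ V.card * F (insert a I ∪ V))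
        = ∑ V ∈ (T \ I).powerset, (-1 : ℝ) ^ V.card * F (I ∪ V) := by
      intro I hI
      have haI : a ∉ I := fun h => ha (mem_powerset.1 hI h)
      have e1 : insert a T \ I = insert a (T \ I) := by
        rw [insert_sdiff_of_notMem _ haI]
      have e2 : insert a T \ insert a I = T \ I := by
        ext x
        simp only [mem_sdiff, mem_insert]
        constructor
        · rintro ⟨hx | hx, hx2⟩
          · exact absurd (Or.inl hx) hx2
          · exact ⟨hx, fun hxI => hx2 (Or.inr hxI)⟩
        · rintro ⟨hx, hx2⟩
          exact ⟨Or.inr hx, by rintro (rfl | hxI); exacts [ha hx, hx2 hxI]⟩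
      have haTI : a ∉ T \ I := fun h => ha (mem_sdiff.1 h).1
      rw [e1, e2, Finset.sum_powerset_insert haTI, add_assoc, ← Finset.sum_add_distrib]
      have h5 : ∀ V ∈ (T \ I).powerset,
          ((-1 : ℝ) ^ (insert a V).card * F (I ∪ insert a V)
            + (-1 : ℝ) ^ V.card * F (insert a I ∪ V)) = 0 := by
        intro V hV
        have haV : a ∉ V := fun h => haTI (mem_powerset.1 hV h)
        have h6 : I ∪ insert a V = insert a (I ∪ V) := by rw [union_insert]
        have h7 : insert a I ∪ V = insert a (I ∪ V) := by rw [insert_union]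
        rw [h6, h7, card_insert_of_notMem haV, pow_succ]
        ring
      rw [Finset.sum_congr rfl h5]
      simp
    rw [Finset.sum_congr rfl key, ih F]

/-! ### PSD helper lemmas -/

lemma lasDecomp_psd_diag_nonneg {ι : Type*} [Fintype ι] [DecidableEq ι] {M : Matrix ι ι ℝ}
    (h : M.PosSemidef) (i : ι) : 0 ≤ M i i := by
  have h2 := h.dotProduct_mulVec_nonneg (Pi.single i 1)
  rw [star_trivial, dotProduct_comm, dotProduct_single,
    Matrix.mulVec_single] at h2
  simpa using h2

lemma lasDecomp_psd_offdiag_zero {ι : Type*} [Fintype ι] [DecidableEq ι] {M : Matrix ι ι ℝ}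
    (h : M.PosSemidef) (i j : ι) (hi : M i i = 0) : M i j = 0 := by
  by_cases hij : i = j
  · subst hij; exact hi
  by_contra hMij
  have hsym : M j i = M i j := by
    nth_rewrite 1 [← h.1]
    simp [Matrix.conjTranspose_apply]
  have key : ∀ a : ℝ, 0 ≤ 2 * a * M i j + M j j := by
    intro a
    have h2 := h.dotProduct_mulVec_nonneg (Pi.single i a + Pi.single j 1)
    rw [star_trivial, Matrix.mulVec_add, Matrix.mulVec_single, Matrix.mulVec_single,
      dotProduct_add, add_dotProduct, add_dotProduct,
      single_dotProduct, single_dotProduct, single_dotProduct,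
      single_dotProduct] at h2
    calc (0:ℝ) ≤ a * (M i i * a) + 1 * (M j i * a) + (a * (M i j * 1) + 1 * (M j j * 1)) := h2
    _ = 2 * a * M i j + M j j := by rw [hi, hsym]; ring
  have h2m : 2 * M i j ≠ 0 := by
    intro h0
    exact hMij (by linarith [mul_eq_zero.1 h0])
  have hfin := key (-(M j j + 1) / (2 * M i j))
  rw [show 2 * (-(M j j + 1) / (2 * M i j)) * M i j = -(M j j + 1) by
    field_simp] at hfin
  linarith

lemma lasDecomp_psd_smul_mat {ι : Type*} [Fintype ι] {M : Matrix ι ι ℝ}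
    (h : M.PosSemidef) (c : ℝ) (hc : 0 ≤ c) : (c • M).PosSemidef := by
  refine Matrix.PosSemidef.of_dotProduct_mulVec_nonneg ?_ (fun x => ?_)
  · rw [Matrix.IsHermitian, Matrix.conjTranspose_smul, h.1, star_trivial]
  · rw [Matrix.smul_mulVec, dotProduct_smul, smul_eq_mul]
    exact mul_nonneg hc (h.dotProduct_mulVec_nonneg x)

lemma lasDecomp_moment_vanish {α : Type*} [Fintype α] [DecidableEq α] {w : Finset α → ℝ} {τ : ℕ}
    {I : Finset α} (h : (momentMatrix w (τ + 1)).PosSemidef) (hI : I.card ≤ τ + 1)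
    (h0 : w I = 0) : ∀ J : Finset α, I ⊆ J → J.card ≤ 2 * τ + 2 → w J = 0 := by
  intro J hIJ hJ
  obtain ⟨J₁, hJ₁sub, hJ₁card⟩ := Finset.exists_subset_card_eq
    (min_le_left (J \ I).card (τ + 1 - I.card))
  set K₁ := I ∪ J₁ with hK₁
  have hJ₁J : J₁ ⊆ J \ I := hJ₁sub
  have hK₁J : K₁ ⊆ J := union_subset hIJ (hJ₁J.trans (sdiff_subset))
  have hcardJI : (J \ I).card = J.card - I.card := card_sdiff_of_subset hIJ
  have hK₁card : K₁.card ≤ τ + 1 := by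
    have h1 : K₁.card ≤ I.card + J₁.card := card_union_le _ _
    have := hI
    omega
  have hK₂card : (J \ K₁).card ≤ τ + 1 := by
    have h2 : (J \ K₁).card = J.card - K₁.card := card_sdiff_of_subset hK₁J
    have h3 : I.card + J₁.card - (I ∩ J₁).card = K₁.card := by
      rw [hK₁]; exact (card_union I J₁).symm ▸ rfl
    have h4 : (I ∩ J₁).card = 0 := by
      rw [card_eq_zero]
      apply eq_empty_of_forall_notMem
      intro x hx
      have := mem_sdiff.1 (hJ₁J (mem_of_mem_inter_right hx))
      exact this.2 (mem_of_mem_inter_left hx)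
    omega
  have step1 : w K₁ = 0 := by
    have := lasDecomp_psd_offdiag_zero h ⟨I, hI⟩ ⟨K₁, hK₁card⟩ (by
      show w (I ∪ I) = 0
      rwa [union_self])
    have hIK : I ∪ K₁ = K₁ := union_eq_right.2 (subset_union_left)
    calc w K₁ = w (I ∪ K₁) := by rw [hIK]
    _ = 0 := this
  have step2 : w J = 0 := by
    have := lasDecomp_psd_offdiag_zero h ⟨K₁, hK₁card⟩ ⟨J \ K₁, hK₂card⟩ (by
      show w (K₁ ∪ K₁) = 0
      rwa [union_self])
    have hKJ : K₁ ∪ (J \ K₁) = J := union_sdiff_of_subset hK₁J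
    calc w J = w (K₁ ∪ (J \ K₁)) := by rw [hKJ]
    _ = 0 := this
  exact step2

/-! ### The conditioning operator -/

/-- Unnormalized conditioning of `y'` on `x_i = 1 (i ∈ I)`, `x_j = 0 (j ∈ S \ I)`. -/
def lasDecompW {α : Type*} [DecidableEq α] (S I : Finset α) (y' : Finset α → ℝ) :
    Finset α → ℝ :=
  fun M => ∑ V ∈ (S \ I).powerset, (-1 : ℝ) ^ V.card * y' (M ∪ I ∪ V)

lemma lasDecomp_shift_w_comm {α ι : Type*} [Fintype α] [DecidableEq α] (A : ι → α → ℝ)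
    (b : ι → ℝ) (ℓ : ι) (S I : Finset α) (g : Finset α → ℝ) :
    shiftVec A b ℓ (lasDecompW S I g) = lasDecompW S I (shiftVec A b ℓ g) := by
  funext M
  simp only [shiftVec, lasDecompW]
  have e1 : ∀ i : α, A ℓ i * (∑ V ∈ (S \ I).powerset, (-1 : ℝ) ^ V.card * g (insert i M ∪ I ∪ V))
      = ∑ V ∈ (S \ I).powerset, (-1 : ℝ) ^ V.card * (A ℓ i * g (insert i (M ∪ I ∪ V))) := by
    intro i
    rw [Finset.mul_sum]
    apply Finset.sum_congr rfl
    intro V _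
    rw [Finset.insert_union, Finset.insert_union]
    ring
  rw [Finset.sum_congr rfl (fun i _ => e1 i), Finset.sum_comm, Finset.mul_sum,
    ← Finset.sum_sub_distrib]
  apply Finset.sum_congr rfl
  intro V _
  rw [← Finset.mul_sum]
  ring

lemma lasDecomp_psd_pull {α : Type*} [Fintype α] [DecidableEq α] (S I : Finset α) (hIS : I ⊆ S)
    (k s : ℕ) (hI : I.card ≤ k) (hks : k ≤ s) (g : Finset α → ℝ)
    (hg : ∀ X : Finset α, k < (X ∩ S).card → g X = 0)
    (hpsd : (momentMatrix g s).PosSemidef) :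
    (momentMatrix (lasDecompW S I g) (s - k)).PosSemidef := by
  classical
  set F : Finset (Finset α) := (S \ I).powerset.filter (fun V => I.card + V.card ≤ k) with hF
  have hsize : ∀ (M : {X : Finset α // X.card ≤ s - k}), ∀ V ∈ F, (M.1 ∪ I ∪ V).card ≤ s := by
    rintro ⟨M, hM⟩ V hV
    rw [hF, mem_filter] at hV
    show (M ∪ I ∪ V).card ≤ s
    have h2 := card_union_le (M ∪ I) V
    have h3 := card_union_le M I
    have h4 := hV.2
    omega
  set P : Matrix {X : Finset α // X.card ≤ s} {X : Finset α // X.card ≤ s - k} ℝ :=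
    fun N M => ∑ V ∈ F, if N.1 = M.1 ∪ I ∪ V then (-1 : ℝ) ^ V.card else 0 with hP
  have hQpsd := hpsd.conjTranspose_mul_mul_same P
  set Q := P.conjTranspose * momentMatrix g s * P with hQdef
  have key : momentMatrix (lasDecompW S I g) (s - k) = Q := by
    ext M M'
    have collapse : ∀ (h : Finset α → ℝ) (M : {X : Finset α // X.card ≤ s - k}),
        (∑ N : {X : Finset α // X.card ≤ s}, P N M * h N.1)
          = ∑ V ∈ F, (-1 : ℝ) ^ V.card * h (M.1 ∪ I ∪ V) := by
      intro h M
      have e1 : ∀ N : {X : Finset α // X.card ≤ s},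
          P N M * h N.1 = ∑ V ∈ F, (if N.1 = M.1 ∪ I ∪ V then (-1 : ℝ) ^ V.card * h N.1 else 0) := by
        intro N
        rw [hP]
        rw [Finset.sum_mul]
        apply Finset.sum_congr rfl
        intro V _
        rw [ite_mul, zero_mul]
      rw [Finset.sum_congr rfl (fun N _ => e1 N), Finset.sum_comm]
      apply Finset.sum_congr rfl
      intro V hV
      have hc : (M.1 ∪ I ∪ V).card ≤ s := hsize M V hV
      have e2 : ∀ N : {X : Finset α // X.card ≤ s},
          (if N.1 = M.1 ∪ I ∪ V then (-1 : ℝ) ^ V.card * h N.1 else 0)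
            = (if N = ⟨M.1 ∪ I ∪ V, hc⟩ then (-1 : ℝ) ^ V.card * h N.1 else 0) := by
        intro N
        congr 1
        exact propext ⟨fun hh => Subtype.ext hh, fun hh => by rw [hh]⟩
      rw [Finset.sum_congr rfl (fun N _ => e2 N), Finset.sum_ite_eq' Finset.univ]
      simp
    have step0 : Q M M' = ∑ N' : {X : Finset α // X.card ≤ s},
        P N' M' * (∑ N : {X : Finset α // X.card ≤ s}, P N M * g (N.1 ∪ N'.1)) := by
      rw [hQdef]
      rw [Matrix.mul_apply]
      apply Finset.sum_congr rfl
      intro N' _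
      rw [Matrix.mul_apply, Finset.sum_mul, Finset.mul_sum]
      apply Finset.sum_congr rfl
      intro N _
      rw [Matrix.conjTranspose_apply, star_trivial]
      show P N M * momentMatrix g s N N' * P N' M' = P N' M' * (P N M * g (N.1 ∪ N'.1))
      show P N M * g (N.1 ∪ N'.1) * P N' M' = P N' M' * (P N M * g (N.1 ∪ N'.1))
      ring
    have step1 : Q M M' = ∑ V' ∈ F, (-1 : ℝ) ^ V'.card *
        (∑ V ∈ F, (-1 : ℝ) ^ V.card * g ((M.1 ∪ I ∪ V) ∪ (M'.1 ∪ I ∪ V'))) := by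
      rw [step0]
      rw [Finset.sum_congr rfl (fun N' _ => by
        rw [collapse (fun X => g (X ∪ N'.1)) M])]
      exact collapse (fun X => ∑ V ∈ F, (-1 : ℝ) ^ V.card * g ((M.1 ∪ I ∪ V) ∪ X)) M'
    have setrw : ∀ V V' : Finset α,
        (M.1 ∪ I ∪ V) ∪ (M'.1 ∪ I ∪ V') = ((M.1 ∪ M'.1) ∪ I) ∪ (V ∪ V') := by
      intro V V'
      ext x
      simp only [mem_union]
      tauto
    have hvanish : ∀ (W X : Finset α), W ⊆ S \ I → k < I.card + W.card →
        I ∪ W ⊆ X → g X = 0 := by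
      intro W X hWS hWk hsub
      apply hg
      have hdisj : Disjoint I W := by
        rw [Finset.disjoint_left]
        intro x hxI hxW
        exact (Finset.mem_sdiff.1 (hWS hxW)).2 hxI
      have hcard : (I ∪ W).card = I.card + W.card := card_union_of_disjoint hdisj
      have hsubS : I ∪ W ⊆ X ∩ S :=
        Finset.subset_inter hsub (Finset.union_subset hIS (hWS.trans sdiff_subset))
      calc k < I.card + W.card := hWk
      _ = (I ∪ W).card := hcard.symm
      _ ≤ (X ∩ S).card := card_le_card hsubS
    have step2 : Q M M' = ∑ V' ∈ (S \ I).powerset, (-1 : ℝ) ^ V'.card *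
        (∑ V ∈ (S \ I).powerset, (-1 : ℝ) ^ V.card *
          g (((M.1 ∪ M'.1) ∪ I) ∪ (V ∪ V'))) := by
      rw [step1]
      have inner : ∀ V' : Finset α,
          (∑ V ∈ F, (-1 : ℝ) ^ V.card * g ((M.1 ∪ I ∪ V) ∪ (M'.1 ∪ I ∪ V')))
            = ∑ V ∈ (S \ I).powerset, (-1 : ℝ) ^ V.card *
                g (((M.1 ∪ M'.1) ∪ I) ∪ (V ∪ V')) := by
        intro V'
        rw [Finset.sum_congr rfl (fun V _ => by rw [setrw V V'])]
        apply Finset.sum_subset (Finset.filter_subset _ _)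
        intro V hV hVF
        have hVS : V ⊆ S \ I := Finset.mem_powerset.1 hV
        have hVk : ¬ (I.card + V.card ≤ k) := by
          intro hcon
          exact hVF (Finset.mem_filter.2 ⟨hV, hcon⟩)
        rw [hvanish V _ hVS (by omega) (by
          intro x hx
          rcases Finset.mem_union.1 hx with hxI | hxV
          · exact Finset.mem_union_left _ (Finset.mem_union_right _ hxI)
          · exact Finset.mem_union_right _ (Finset.mem_union_left _ hxV)), mul_zero]
      rw [Finset.sum_congr rfl (fun V' _ => by rw [inner V'])]
      apply Finset.sum_subset (Finset.filter_subset _ _)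
      intro V' hV' hV'F
      have hV'S : V' ⊆ S \ I := Finset.mem_powerset.1 hV'
      have hV'k : ¬ (I.card + V'.card ≤ k) := by
        intro hcon
        exact hV'F (Finset.mem_filter.2 ⟨hV', hcon⟩)
      have hz : (∑ V ∈ (S \ I).powerset, (-1 : ℝ) ^ V.card *
          g (((M.1 ∪ M'.1) ∪ I) ∪ (V ∪ V'))) = 0 := by
        apply Finset.sum_eq_zero
        intro V hV
        rw [hvanish V' _ hV'S (by omega) (by
          intro x hx
          rcases Finset.mem_union.1 hx with hxI | hxV'
          · exact Finset.mem_union_left _ (Finset.mem_union_right _ hxI)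
          · exact Finset.mem_union_right _ (Finset.mem_union_right _ hxV')), mul_zero]
      rw [hz, mul_zero]
    have e3 : ∀ V' ∈ (S \ I).powerset, (-1 : ℝ) ^ V'.card *
        (∑ V ∈ (S \ I).powerset, (-1 : ℝ) ^ V.card *
          g (((M.1 ∪ M'.1) ∪ I) ∪ (V ∪ V')))
        = ∑ V ∈ (S \ I).powerset, (-1 : ℝ) ^ V'.card * (-1 : ℝ) ^ V.card *
            g (((M.1 ∪ M'.1) ∪ I) ∪ (V' ∪ V)) := by
      intro V' _
      rw [Finset.mul_sum]
      apply Finset.sum_congr rfl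
      intro V _
      rw [Finset.union_comm V V']
      ring
    show lasDecompW S I g (M.1 ∪ M'.1) = Q M M'
    show (∑ V ∈ (S \ I).powerset, (-1 : ℝ) ^ V.card * g ((M.1 ∪ M'.1) ∪ I ∪ V)) = Q M M'
    rw [step2, Finset.sum_congr rfl e3,
      lasDecomp_gsum (S \ I) (fun U => g (((M.1 ∪ M'.1) ∪ I) ∪ U))]
  rw [key]
  exact hQpsd

lemma lasDecomp_shift_smul {α ι : Type*} [Fintype α] [DecidableEq α] (A : ι → α → ℝ)
    (b : ι → ℝ) (ℓ : ι) (c : ℝ) (v : Finset α → ℝ) :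
    shiftVec A b ℓ (fun M => c * v M) = fun M => c * shiftVec A b ℓ v M := by
  funext M
  simp only [shiftVec]
  rw [mul_sub, Finset.mul_sum]
  congr 1
  · apply Finset.sum_congr rfl
    intro i _
    ring
  · ring

/-- Decomposition Theorem (feasibility form). -/
theorem lasserre_decomposition_feasibility (n m t k : ℕ) (hk : k < t)
    (A : Matrix (Fin m) (Fin n) ℝ) (b : Fin m → ℝ)
    (y : Finset (Fin n) → ℝ) (hy : IsLasserre (fun ℓ i => A ℓ i) b t y)
    (S : Finset (Fin n))
    (hSk : ∀ I : Finset (Fin n), I ⊆ S →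
      (∃ x : Fin n → ℝ, memK A b x ∧ ∀ i ∈ I, x i = 1) → I.card ≤ k) :
    ∃ (N : ℕ) (lam : Fin N → ℝ) (z : Fin N → Finset (Fin n) → ℝ),
      (∀ j, IsLasserre (fun ℓ i => A ℓ i) b (t - k) (z j)) ∧
      (∀ j, ∀ i ∈ S, z j {i} = 0 ∨ z j {i} = 1) ∧
      (∀ j, 0 ≤ lam j) ∧ (∑ j, lam j = 1) ∧
      (∀ J : Finset (Fin n), J.card ≤ 2 * (t - k) + 2 →
        y J = ∑ j, lam j * z j J) := by
  classical
  obtain ⟨hy0, hyM, hyS⟩ := hy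
  -- truncated moment vector
  set yh : Finset (Fin n) → ℝ := fun M => if (M ∩ S).card ≤ k then y M else 0 with hyh
  -- Lemma: moments of infeasible one-sets of size k+1 vanish
  have L1 : ∀ I : Finset (Fin n), I ⊆ S → I.card = k + 1 → y I = 0 := by
    intro I hIS hIcard
    by_contra h0
    have hIk : I.card ≤ t := by omega
    have hIt1 : I.card ≤ t + 1 := by omega
    have hpos : 0 < y I := by
      have hnn := lasDecomp_psd_diag_nonneg hyM ⟨I, hIt1⟩
      have hdiag : momentMatrix y (t + 1) ⟨I, hIt1⟩ ⟨I, hIt1⟩ = y I := by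
        show y (I ∪ I) = y I
        rw [union_self]
      rw [hdiag] at hnn
      exact lt_of_le_of_ne hnn (Ne.symm h0)
    set x : Fin n → ℝ := fun r => y (insert r I) / y I with hx
    have hmem : memK A b x := by
      intro ℓ
      have hd := lasDecomp_psd_diag_nonneg (hyS ℓ) ⟨I, hIk⟩
      have hdiag : momentMatrix (shiftVec (fun ℓ i => A ℓ i) b ℓ y) t ⟨I, hIk⟩ ⟨I, hIk⟩
          = (∑ i, A ℓ i * y (insert i I)) - b ℓ * y I := by
        show shiftVec (fun ℓ i => A ℓ i) b ℓ y (I ∪ I) = _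
        rw [union_self]
        rfl
      rw [hdiag] at hd
      have hsum : ∑ i, A ℓ i * x i = (∑ i, A ℓ i * y (insert i I)) / y I := by
        rw [Finset.sum_div]
        apply Finset.sum_congr rfl
        intro i _
        rw [hx]
        ring
      rw [hsum, le_div_iff₀ hpos]
      nlinarith [hd]
    have hone : ∀ i ∈ I, x i = 1 := by
      intro i hi
      rw [hx]
      show y (insert i I) / y I = 1
      rw [Finset.insert_eq_self.2 hi, div_self (ne_of_gt hpos)]
    have := hSk I hIS ⟨x, hmem, hone⟩
    omega
  -- moments of sets with too many S-elements vanish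
  have F2 : ∀ M : Finset (Fin n), M.card ≤ 2 * t + 2 → k < (M ∩ S).card → y M = 0 := by
    intro M hM hMk
    obtain ⟨I, hIsub, hIcard⟩ := Finset.exists_subset_card_eq
      (show k + 1 ≤ (M ∩ S).card by omega)
    have hIS : I ⊆ S := hIsub.trans inter_subset_right
    have hIM : I ⊆ M := hIsub.trans inter_subset_left
    exact lasDecomp_moment_vanish hyM (by omega) (L1 I hIS hIcard) M hIM (by omega)
  have hatEq : ∀ M : Finset (Fin n), M.card ≤ 2 * t + 2 → yh M = y M := by
    intro M hM
    rw [hyh]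
    by_cases hc : (M ∩ S).card ≤ k
    · simp only [if_pos hc]
    · simp only [if_neg hc]
      exact (F2 M hM (by omega)).symm
  have hatVan : ∀ X : Finset (Fin n), k < (X ∩ S).card → yh X = 0 := by
    intro X hX
    rw [hyh]
    exact if_neg (by omega)
  have hMeq : momentMatrix yh (t + 1) = momentMatrix y (t + 1) := by
    ext N N'
    show yh (N.1 ∪ N'.1) = y (N.1 ∪ N'.1)
    apply hatEq
    have h1 := card_union_le N.1 N'.1
    have h2 := N.2
    have h3 := N'.2
    omega
  have hSeq : ∀ ℓ, momentMatrix (shiftVec (fun ℓ i => A ℓ i) b ℓ yh) t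
      = momentMatrix (shiftVec (fun ℓ i => A ℓ i) b ℓ y) t := by
    intro ℓ
    ext N N'
    show shiftVec (fun ℓ i => A ℓ i) b ℓ yh (N.1 ∪ N'.1)
      = shiftVec (fun ℓ i => A ℓ i) b ℓ y (N.1 ∪ N'.1)
    have hcard : (N.1 ∪ N'.1).card ≤ 2 * t := by
      have h1 := card_union_le N.1 N'.1
      have h2 := N.2
      have h3 := N'.2
      omega
    simp only [shiftVec]
    rw [hatEq _ (by omega)]
    congr 1
    apply Finset.sum_congr rfl
    intro i _
    rw [hatEq _ (by
      have := card_insert_le i (N.1 ∪ N'.1)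
      omega)]
  have hatShiftVan : ∀ ℓ, ∀ X : Finset (Fin n), k < (X ∩ S).card →
      shiftVec (fun ℓ i => A ℓ i) b ℓ yh X = 0 := by
    intro ℓ X hX
    simp only [shiftVec]
    rw [hatVan X hX, mul_zero, sub_zero]
    apply Finset.sum_eq_zero
    intro i _
    rw [hatVan (insert i X) (lt_of_lt_of_le hX (card_le_card
      (inter_subset_inter (subset_insert i X) Subset.rfl))), mul_zero]
  -- PSD facts about the pieces
  have wPSD : ∀ I : Finset (Fin n), I ⊆ S → I.card ≤ k →
      (momentMatrix (lasDecompW S I yh) (t - k + 1)).PosSemidef := by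
    intro I hIS hIk
    have hres := lasDecomp_psd_pull S I hIS k (t + 1) hIk (by omega) yh hatVan
      (by rw [hMeq]; exact hyM)
    have heq : t + 1 - k = t - k + 1 := by omega
    rw [heq] at hres
    exact hres
  have wPSDs : ∀ I : Finset (Fin n), I ⊆ S → I.card ≤ k → ∀ ℓ,
      (momentMatrix (shiftVec (fun ℓ i => A ℓ i) b ℓ (lasDecompW S I yh)) (t - k)).PosSemidef := by
    intro I hIS hIk ℓ
    rw [lasDecomp_shift_w_comm]
    exact lasDecomp_psd_pull S I hIS k t hIk (by omega) _ (hatShiftVan ℓ)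
      (by rw [hSeq ℓ]; exact hyS ℓ)
  have wdiag : ∀ I : Finset (Fin n), I ⊆ S → I.card ≤ k → 0 ≤ lasDecompW S I yh ∅ := by
    intro I hIS hIk
    have hnn := lasDecomp_psd_diag_nonneg (wPSD I hIS hIk) ⟨∅, by simp⟩
    have : momentMatrix (lasDecompW S I yh) (t - k + 1) ⟨∅, by simp⟩ ⟨∅, by simp⟩
        = lasDecompW S I yh ∅ := by
      show lasDecompW S I yh (∅ ∪ ∅) = lasDecompW S I yh ∅
      rw [union_self]
    rwa [this] at hnn
  have wbig : ∀ I : Finset (Fin n), I ⊆ S → ∀ M, k < I.card → lasDecompW S I yh M = 0 := by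
    intro I hIS M hIk
    apply Finset.sum_eq_zero
    intro V _
    rw [hatVan, mul_zero]
    have hsub : I ⊆ (M ∪ I ∪ V) ∩ S := by
      apply subset_inter _ hIS
      intro x hx
      exact mem_union_left _ (mem_union_right _ hx)
    calc k < I.card := hIk
    _ ≤ ((M ∪ I ∪ V) ∩ S).card := card_le_card hsub
  have wzero : ∀ I : Finset (Fin n), I ⊆ S → I.card ≤ k → lasDecompW S I yh ∅ = 0 →
      ∀ J : Finset (Fin n), J.card ≤ 2 * (t - k) + 2 → lasDecompW S I yh J = 0 := by
    intro I hIS hIk h0 J hJ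
    exact lasDecomp_moment_vanish (wPSD I hIS hIk) (by simp) h0 J (empty_subset J) (by omega)
  have wone : ∀ I : Finset (Fin n), ∀ i ∈ I, lasDecompW S I yh {i} = lasDecompW S I yh ∅ := by
    intro I i hi
    apply Finset.sum_congr rfl
    intro V _
    congr 2
    show ({i} ∪ I) ∪ V = (∅ ∪ I) ∪ V
    congr 1
    rw [empty_union]
    exact union_eq_right.2 (singleton_subset_iff.2 hi)
  have wnot : ∀ I : Finset (Fin n), I ⊆ S → ∀ i ∈ S, i ∉ I → lasDecompW S I yh {i} = 0 := by
    intro I hIS i hiS hiI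
    apply lasDecomp_sum_pair_vanish (S \ I) i (mem_sdiff.2 ⟨hiS, hiI⟩)
      (fun V => yh ({i} ∪ I ∪ V))
    intro V
    congr 1
    ext x
    simp only [mem_union, mem_insert, mem_singleton]
    tauto
  have sumAll : ∀ J : Finset (Fin n), J.card ≤ 2 * (t - k) + 2 →
      ∑ I ∈ S.powerset, lasDecompW S I yh J = y J := by
    intro J hJ
    have hpsum := lasDecomp_psum S (fun X => yh (J ∪ X))
    have e : ∀ I ∈ S.powerset, lasDecompW S I yh J
        = ∑ V ∈ (S \ I).powerset, (-1 : ℝ) ^ V.card * yh (J ∪ (I ∪ V)) := by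
      intro I _
      apply Finset.sum_congr rfl
      intro V _
      rw [Finset.union_assoc]
    rw [Finset.sum_congr rfl e, hpsum, Finset.union_empty]
    exact hatEq J (by omega)
  -- the index set
  set G : Finset (Finset (Fin n)) := S.powerset.filter (fun I => lasDecompW S I yh ∅ ≠ 0)
    with hG
  have hGmem : ∀ I ∈ G, I ⊆ S ∧ I.card ≤ k ∧ lasDecompW S I yh ∅ ≠ 0 := by
    intro I hI
    rw [hG, mem_filter] at hI
    have hIS := mem_powerset.1 hI.1
    refine ⟨hIS, ?_, hI.2⟩
    by_contra hc
    exact hI.2 (wbig I hIS ∅ (by omega))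
  have sumG : ∀ J : Finset (Fin n), J.card ≤ 2 * (t - k) + 2 →
      ∑ I ∈ G, lasDecompW S I yh J = y J := by
    intro J hJ
    rw [← sumAll J hJ]
    apply Finset.sum_subset (Finset.filter_subset _ _)
    intro I hI hIG
    have hIS := mem_powerset.1 hI
    have h0 : lasDecompW S I yh ∅ = 0 := by
      by_contra hc
      exact hIG (mem_filter.2 ⟨hI, hc⟩)
    by_cases hIk : I.card ≤ k
    · exact wzero I hIS hIk h0 J hJ
    · exact wbig I hIS J (by omega)
  -- the decomposition
  set e : Fin G.card ≃ {x // x ∈ G} := (Fintype.equivFinOfCardEq (Fintype.card_coe G)).symm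
    with he
  refine ⟨G.card, fun j => lasDecompW S (e j).1 yh ∅,
    fun j M => (lasDecompW S (e j).1 yh ∅)⁻¹ * lasDecompW S (e j).1 yh M, ?_, ?_, ?_, ?_, ?_⟩
  · -- IsLasserre
    intro j
    obtain ⟨hIS, hIk, hne⟩ := hGmem (e j).1 (e j).2
    set I := (e j).1
    set c := lasDecompW S I yh ∅ with hc
    have hcpos : 0 ≤ c := wdiag I hIS hIk
    refine ⟨inv_mul_cancel₀ hne, ?_, ?_⟩
    · have : momentMatrix (fun M => c⁻¹ * lasDecompW S I yh M) (t - k + 1)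
          = c⁻¹ • momentMatrix (lasDecompW S I yh) (t - k + 1) := by
        ext N N'
        simp [momentMatrix]
      rw [this]
      exact lasDecomp_psd_smul_mat (wPSD I hIS hIk) _ (inv_nonneg.2 hcpos)
    · intro ℓ
      rw [lasDecomp_shift_smul]
      have : momentMatrix
            (fun M => c⁻¹ * shiftVec (fun ℓ i => A ℓ i) b ℓ (lasDecompW S I yh) M) (t - k)
          = c⁻¹ • momentMatrix (shiftVec (fun ℓ i => A ℓ i) b ℓ (lasDecompW S I yh)) (t - k) := by
        ext N N'
        simp [momentMatrix]
      rw [this]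
      exact lasDecomp_psd_smul_mat (wPSDs I hIS hIk ℓ) _ (inv_nonneg.2 hcpos)
  · -- integrality on S
    intro j i hiS
    obtain ⟨hIS, hIk, hne⟩ := hGmem (e j).1 (e j).2
    by_cases hi : i ∈ (e j).1
    · right
      show (lasDecompW S (e j).1 yh ∅)⁻¹ * lasDecompW S (e j).1 yh {i} = 1
      rw [wone (e j).1 i hi, inv_mul_cancel₀ hne]
    · left
      show (lasDecompW S (e j).1 yh ∅)⁻¹ * lasDecompW S (e j).1 yh {i} = 0
      rw [wnot (e j).1 hIS i hiS hi, mul_zero]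
  · -- nonnegativity
    intro j
    obtain ⟨hIS, hIk, _⟩ := hGmem (e j).1 (e j).2
    exact wdiag (e j).1 hIS hIk
  · -- sums to one
    have h1 : ∑ j, lasDecompW S (e j).1 yh ∅ = ∑ I ∈ G, lasDecompW S I yh ∅ := by
      rw [Equiv.sum_comp e (fun x : {x // x ∈ G} => lasDecompW S x.1 yh ∅)]
      exact Finset.sum_coe_sort G (fun I => lasDecompW S I yh ∅)
    rw [h1, sumG ∅ (by simp), hy0]
  · -- reconstruction
    intro J hJ
    have h1 : ∀ j, lasDecompW S (e j).1 yh ∅ *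
        ((lasDecompW S (e j).1 yh ∅)⁻¹ * lasDecompW S (e j).1 yh J)
        = lasDecompW S (e j).1 yh J := by
      intro j
      obtain ⟨_, _, hne⟩ := hGmem (e j).1 (e j).2
      rw [mul_inv_cancel_left₀ hne]
    rw [Finset.sum_congr rfl (fun j _ => h1 j)]
    have h2 : ∑ j, lasDecompW S (e j).1 yh J = ∑ I ∈ G, lasDecompW S I yh J := by
      rw [Equiv.sum_comp e (fun x : {x // x ∈ G} => lasDecompW S x.1 yh J)]
      exact Finset.sum_coe_sort G (fun I => lasDecompW S I yh J)
    rw [h2, sumG J hJ]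
end

section
/- Let y ∈ Las_t(K) and I ⊆ [n] with |I| ≤ t. If y_{\{i\}} ∈ {0,1} for every i ∈ I, then y_I = ∏_{i∈I} y_{\{i\}}. -/
open Finset

open Matrix in
lemma psd_col_eq {ι : Type*} [Fintype ι] [DecidableEq ι] (M : Matrix ι ι ℝ)
    (hM : M.PosSemidef) (a b : ι)
    (h : M a a - M a b - M b a + M b b = 0) (j : ι) : M j a = M j b := by
  set x : ι → ℝ := Pi.single a 1 - Pi.single b 1 with hx
  have hmv : M *ᵥ x = (fun j => M j a) - fun j => M j b := by
    funext j
    simp [hx, Matrix.mulVec_sub, Matrix.mulVec_single]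
  have h0 : star x ⬝ᵥ (M *ᵥ x) = 0 := by
    rw [hmv]
    simp only [hx, star_trivial, sub_dotProduct, dotProduct_sub,
      single_dotProduct, one_mul, Pi.sub_apply]
    linarith
  have := (hM.dotProduct_mulVec_zero_iff x).mp h0
  have hj := congrFun this j
  rw [hmv] at hj
  simpa [sub_eq_zero] using hj

open Matrix in
lemma psd_col_zero {ι : Type*} [Fintype ι] [DecidableEq ι] (M : Matrix ι ι ℝ)
    (hM : M.PosSemidef) (a : ι) (h : M a a = 0) (j : ι) : M j a = 0 := by
  set x : ι → ℝ := Pi.single a 1 with hx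
  have h0 : star x ⬝ᵥ (M *ᵥ x) = 0 := by
    simp [hx, Matrix.mulVec_single, single_dotProduct, h]
  have := (hM.dotProduct_mulVec_zero_iff x).mp h0
  have hj := congrFun this j
  simpa [hx, Matrix.mulVec_single] using hj

lemma mm_zero {α : Type*} [Fintype α] [DecidableEq α] (y : Finset α → ℝ) (t : ℕ)
    (hM : (momentMatrix y (t + 1)).PosSemidef) (i : α) (hi : y {i} = 0)
    (J : Finset α) (hJ : J.card ≤ t + 1) : y (J ∪ {i}) = 0 := by
  have ha : ({i} : Finset α).card ≤ t + 1 := by simp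
  have := psd_col_zero _ hM ⟨{i}, ha⟩ (by simpa [momentMatrix] using hi) ⟨J, hJ⟩
  simpa [momentMatrix] using this

lemma mm_one {α : Type*} [Fintype α] [DecidableEq α] (y : Finset α → ℝ) (t : ℕ)
    (h0 : y ∅ = 1) (hM : (momentMatrix y (t + 1)).PosSemidef) (i : α) (hi : y {i} = 1)
    (J : Finset α) (hJ : J.card ≤ t + 1) : y (J ∪ {i}) = y J := by
  have ha : ({i} : Finset α).card ≤ t + 1 := by simp
  have hb : (∅ : Finset α).card ≤ t + 1 := by simp
  have := psd_col_eq _ hM ⟨{i}, ha⟩ ⟨∅, hb⟩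
    (by simp [momentMatrix, hi, h0]) ⟨J, hJ⟩
  simpa [momentMatrix] using this

lemma mm_all_one {α : Type*} [Fintype α] [DecidableEq α] (y : Finset α → ℝ) (t : ℕ)
    (h0 : y ∅ = 1) (hM : (momentMatrix y (t + 1)).PosSemidef) (s : Finset α)
    (hs : s.card ≤ t + 1) (h1 : ∀ i ∈ s, y {i} = 1) : y s = 1 := by
  induction s using Finset.induction_on with
  | empty => exact h0
  | @insert a s ha ih =>
      have hs' : s.card ≤ t + 1 :=
        le_trans (Finset.card_le_card (Finset.subset_insert _ _)) hs
      have key : y (s ∪ {a}) = y s :=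
        mm_one y t h0 hM a (h1 a (Finset.mem_insert_self _ _)) s hs'
      rw [Finset.union_comm, ← Finset.insert_eq] at key
      rw [key]
      exact ih hs' fun i hi => h1 i (Finset.mem_insert_of_mem hi)


/-- For `y ∈ Las_t(K)` and `|I| ≤ t`: if all singleton entries on `I` are `0/1`-valued,
then `y_I = ∏_{i ∈ I} y_{i}`. -/
theorem lasserre_product_on_integral (n m t : ℕ) (A : Matrix (Fin m) (Fin n) ℝ) (b : Fin m → ℝ)
    (y : Finset (Fin n) → ℝ) (hy : IsLasserre (fun ℓ i => A ℓ i) b t y)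
    (I : Finset (Fin n)) (hI : I.card ≤ t)
    (h01 : ∀ i ∈ I, y {i} = 0 ∨ y {i} = 1) :
    y I = ∏ i ∈ I, y {i} := by
  obtain ⟨h0, hM, -⟩ := hy
  by_cases hz : ∃ i ∈ I, y {i} = 0
  · obtain ⟨i, hiI, hi0⟩ := hz
    have hJ : (I.erase i).card ≤ t + 1 :=
      le_trans (le_trans (Finset.card_erase_le) hI) (Nat.le_succ t)
    have hIe : I.erase i ∪ {i} = I := by
      rw [Finset.union_comm, ← Finset.insert_eq, Finset.insert_erase hiI]
    have hy0 : y I = 0 := by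
      have := mm_zero y t hM i hi0 (I.erase i) hJ
      rwa [hIe] at this
    rw [hy0]
    exact (Finset.prod_eq_zero hiI hi0).symm
  · push_neg at hz
    have h1 : ∀ i ∈ I, y {i} = 1 := fun i hi => (h01 i hi).resolve_left (hz i hi)
    rw [mm_all_one y t h0 hM I (le_trans hI (Nat.le_succ t)) h1]
    exact (Finset.prod_eq_one h1).symm
end

section
/- Let y ∈ Las_t(K) and I, J ⊆ [n] with |I| ≤ t and |J| ≤ t. If y_I = 1, then y_{I∪J} = y_J. -/
open Finset Matrix

/-- For `y ∈ Las_t(K)`, `|I|, |J| ≤ t` and `y_I = 1`, one has `y_{I ∪ J} = y_J`. -/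
theorem lasserre_union_of_one (n m t : ℕ) (A : Matrix (Fin m) (Fin n) ℝ) (b : Fin m → ℝ)
    (y : Finset (Fin n) → ℝ) (hy : IsLasserre (fun ℓ i => A ℓ i) b t y)
    (I J : Finset (Fin n)) (hI : I.card ≤ t) (hJ : J.card ≤ t) (hyI : y I = 1) :
    y (I ∪ J) = y J := by
  obtain ⟨hy0, hM, -⟩ := hy
  set M := momentMatrix y (t + 1) with hMdef
  set e0 : {S : Finset (Fin n) // S.card ≤ t + 1} := ⟨∅, by simp⟩
  set eI : {S : Finset (Fin n) // S.card ≤ t + 1} := ⟨I, hI.trans (Nat.le_succ t)⟩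
  set eJ : {S : Finset (Fin n) // S.card ≤ t + 1} := ⟨J, hJ.trans (Nat.le_succ t)⟩
  set x : {S : Finset (Fin n) // S.card ≤ t + 1} → ℝ :=
    Pi.single e0 1 - Pi.single eI 1 with hx
  have hMx : ∀ i, (M *ᵥ x) i = M i e0 - M i eI := by
    intro i
    simp [hx, Matrix.mulVec_sub, Matrix.mulVec_single]
  have hquad : star x ⬝ᵥ M *ᵥ x = 0 := by
    have : star x = x := by simp
    rw [this, hx, sub_dotProduct, single_dotProduct,
      single_dotProduct, hMx, hMx]
    have h00 : M e0 e0 = 1 := by simp [hMdef, momentMatrix, e0, hy0]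
    have h0I : M e0 eI = 1 := by simp [hMdef, momentMatrix, e0, eI, hyI]
    have hI0 : M eI e0 = 1 := by simp [hMdef, momentMatrix, e0, eI, hyI]
    have hII : M eI eI = 1 := by simp [hMdef, momentMatrix, eI, hyI]
    rw [h00, h0I, hI0, hII]; ring
  have hzero := (hM.dotProduct_mulVec_zero_iff x).mp hquad
  have := congrFun hzero eJ
  rw [hMx] at this
  have hJ0 : M eJ e0 = y J := by simp [hMdef, momentMatrix, e0, eJ]
  have hJI : M eJ eI = y (I ∪ J) := by
    simp [hMdef, momentMatrix, eI, eJ, union_comm]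
  rw [hJ0, hJI, Pi.zero_apply] at this
  linarith
end

section
/- (Convergence of the Lasserre hierarchy.) Every y ∈ Las_n(K) lies in the convex hull of the moment vectors of integral feasible points: there exist x^{(1)}, …, x^{(N)} ∈ {0,1}^n with A·x^{(j)} ≥ b for all j, and coefficients λ_1, …, λ_N ≥ 0 with Σ_j λ_j = 1, such that y_I = Σ_j λ_j · ∏_{i∈I} x^{(j)}_i for every I ⊆ [n]. In particular Las_n^proj(K) = conv(K ∩ {0,1}^n). -/
open Finset

section MobiusAux


lemma neg_one_pow_sum_real {α : Type*} [DecidableEq α] (W : Finset α) :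
    (∑ V ∈ W.powerset, (-1 : ℝ) ^ V.card) = if W = ∅ then 1 else 0 := by
  have := @Finset.sum_powerset_neg_one_pow_card α _ W
  have h2 : ((∑ V ∈ W.powerset, (-1 : ℤ) ^ V.card : ℤ) : ℝ)
      = ∑ V ∈ W.powerset, (-1 : ℝ) ^ V.card := by push_cast; ring_nf
  rw [← h2, this]
  split <;> norm_num

lemma alt_sum1 {α : Type*} [Fintype α] [DecidableEq α] (S U : Finset α) :
    (∑ T : Finset α, if S ⊆ T ∧ T ⊆ U then (-1 : ℝ) ^ ((T \ S).card) else 0)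
      = if U = S then 1 else 0 := by
  by_cases hSU : S ⊆ U
  · rw [← Finset.sum_filter]
    have key : ∑ T ∈ Finset.univ.filter (fun T => S ⊆ T ∧ T ⊆ U), (-1 : ℝ) ^ ((T \ S).card)
        = ∑ V ∈ (U \ S).powerset, (-1 : ℝ) ^ V.card := by
      refine Finset.sum_bij' (fun T _ => T \ S) (fun V _ => S ∪ V) ?_ ?_ ?_ ?_ ?_
      · intro T hT
        simp only [mem_filter, mem_univ, true_and] at hT
        exact Finset.mem_powerset.2 (sdiff_subset_sdiff hT.2 le_rfl)
      · intro V hV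
        simp only [mem_powerset] at hV
        simp only [mem_filter, mem_univ, true_and]
        exact ⟨Finset.subset_union_left, Finset.union_subset hSU (hV.trans (sdiff_subset))⟩
      · intro T hT
        simp only [mem_filter, mem_univ, true_and] at hT
        exact Finset.union_sdiff_of_subset hT.1
      · intro V hV
        simp only [mem_powerset] at hV
        have hd : Disjoint S V := Finset.disjoint_sdiff.mono_right hV
        rw [Finset.union_sdiff_cancel_left hd]
      · intro T hT; rfl
    rw [key, neg_one_pow_sum_real]
    have : U \ S = ∅ ↔ U = S := by
      rw [Finset.sdiff_eq_empty_iff_subset]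
      exact ⟨fun h => le_antisymm h hSU, fun h => le_of_eq h⟩
    simp [this]
  · rw [if_neg (fun h : U = S => hSU (le_of_eq h.symm)), Finset.sum_eq_zero]
    intro T _
    rw [if_neg]
    rintro ⟨h1, h2⟩
    exact hSU (h1.trans h2)


lemma alt_sum2 {α : Type*} [Fintype α] [DecidableEq α] (S U : Finset α) :
    (∑ T : Finset α, if S ⊆ T ∧ T ⊆ U then (-1 : ℝ) ^ ((U \ T).card) else 0)
      = if U = S then 1 else 0 := by
  have key : ∀ T : Finset α,
      (if S ⊆ T ∧ T ⊆ U then (-1 : ℝ) ^ ((U \ T).card) else 0)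
        = (-1 : ℝ) ^ ((U \ S).card) * (if S ⊆ T ∧ T ⊆ U then (-1 : ℝ) ^ ((T \ S).card) else 0) := by
    intro T
    split_ifs with h
    · obtain ⟨h1, h2⟩ := h
      have hd : Disjoint (U \ T) (T \ S) :=
        Finset.disjoint_left.2 fun a ha hb => (Finset.mem_sdiff.1 ha).2 (Finset.mem_sdiff.1 hb).1
      have hcard : (U \ T).card + (T \ S).card = (U \ S).card := by
        rw [← Finset.card_union_of_disjoint hd, Finset.sdiff_union_sdiff_cancel h2 h1]
      have : (-1 : ℝ) ^ ((U \ S).card) = (-1 : ℝ) ^ ((U \ T).card) * (-1 : ℝ) ^ ((T \ S).card) := by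
        rw [← pow_add, hcard]
      rw [this, mul_assoc, ← pow_add, ← two_mul, pow_mul, neg_one_sq, one_pow, mul_one]
    · ring
  rw [Finset.sum_congr rfl (fun T _ => key T), ← Finset.mul_sum, alt_sum1]
  split_ifs with h
  · subst h; simp
  · ring

noncomputable def mob {α : Type*} [Fintype α] [DecidableEq α] (z : Finset α → ℝ) (S : Finset α) : ℝ :=
  ∑ T : Finset α, if S ⊆ T then (-1 : ℝ) ^ ((T \ S).card) * z T else 0

lemma mob_inversion {α : Type*} [Fintype α] [DecidableEq α] (z : Finset α → ℝ) (I : Finset α) :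
    z I = ∑ S : Finset α, if I ⊆ S then mob z S else 0 := by
  have step : ∀ S : Finset α, (if I ⊆ S then mob z S else 0)
      = ∑ T : Finset α, (if I ⊆ S ∧ S ⊆ T then (-1 : ℝ) ^ ((T \ S).card) else 0) * z T := by
    intro S
    split_ifs with h
    · rw [mob]
      refine Finset.sum_congr rfl fun T _ => ?_
      by_cases h2 : S ⊆ T <;> simp [h, h2]
    · rw [Finset.sum_eq_zero]
      intro T _
      simp [h]
  rw [Finset.sum_congr rfl (fun S _ => step S), Finset.sum_comm]
  have : ∀ T : Finset α,
      (∑ S : Finset α, (if I ⊆ S ∧ S ⊆ T then (-1 : ℝ) ^ ((T \ S).card) else 0) * z T)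
        = (if T = I then 1 else 0) * z T := by
    intro T
    rw [← Finset.sum_mul, alt_sum2]
  rw [Finset.sum_congr rfl (fun T _ => this T)]
  simp



noncomputable def wvec {α : Type*} [Fintype α] [DecidableEq α] (S : Finset α) :
    Finset α → ℝ := fun T => if S ⊆ T then (-1 : ℝ) ^ ((T \ S).card) else 0

lemma mob_eq_quad {α : Type*} [Fintype α] [DecidableEq α] (z : Finset α → ℝ) (S : Finset α) :
    mob z S = ∑ T : Finset α, wvec S T * ∑ T' : Finset α, z (T ∪ T') * wvec S T' := by
  have expand : ∀ T T' : Finset α, wvec S T * (z (T ∪ T') * wvec S T')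
      = ∑ U : Finset α,
          (if S ⊆ T ∧ T ⊆ U then (-1 : ℝ) ^ ((T \ S).card) else 0) *
          ((if S ⊆ T' ∧ T' ⊆ U then (-1 : ℝ) ^ ((T' \ S).card) else 0) * mob z U) := by
    intro T T'
    rw [mob_inversion z (T ∪ T'), wvec, wvec]
    simp only [Finset.union_subset_iff]
    rw [Finset.sum_mul, Finset.mul_sum]
    refine Finset.sum_congr rfl fun U _ => ?_
    by_cases h1 : S ⊆ T <;> by_cases h2 : S ⊆ T' <;> by_cases h3 : T ⊆ U <;> by_cases h4 : T' ⊆ U <;>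
      simp [h1, h2, h3, h4] <;> ring
  refine Eq.symm ?_
  calc ∑ T : Finset α, wvec S T * ∑ T' : Finset α, z (T ∪ T') * wvec S T'
      = ∑ T : Finset α, ∑ T' : Finset α, wvec S T * (z (T ∪ T') * wvec S T') := by
        refine Finset.sum_congr rfl fun T _ => ?_
        rw [Finset.mul_sum]
    _ = ∑ T : Finset α, ∑ T' : Finset α, ∑ U : Finset α,
          (if S ⊆ T ∧ T ⊆ U then (-1 : ℝ) ^ ((T \ S).card) else 0) *
          ((if S ⊆ T' ∧ T' ⊆ U then (-1 : ℝ) ^ ((T' \ S).card) else 0) * mob z U) := by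
        exact Finset.sum_congr rfl fun T _ => Finset.sum_congr rfl fun T' _ => expand T T'
    _ = ∑ T : Finset α, ∑ U : Finset α, ∑ T' : Finset α,
          (if S ⊆ T ∧ T ⊆ U then (-1 : ℝ) ^ ((T \ S).card) else 0) *
          ((if S ⊆ T' ∧ T' ⊆ U then (-1 : ℝ) ^ ((T' \ S).card) else 0) * mob z U) :=
        Finset.sum_congr rfl fun T _ => Finset.sum_comm
    _ = ∑ U : Finset α, ∑ T : Finset α, ∑ T' : Finset α,
          (if S ⊆ T ∧ T ⊆ U then (-1 : ℝ) ^ ((T \ S).card) else 0) *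
          ((if S ⊆ T' ∧ T' ⊆ U then (-1 : ℝ) ^ ((T' \ S).card) else 0) * mob z U) :=
        Finset.sum_comm
    _ = ∑ U : Finset α,
          (∑ T : Finset α, if S ⊆ T ∧ T ⊆ U then (-1 : ℝ) ^ ((T \ S).card) else 0) *
          ((∑ T' : Finset α, if S ⊆ T' ∧ T' ⊆ U then (-1 : ℝ) ^ ((T' \ S).card) else 0) * mob z U) := by
        refine Finset.sum_congr rfl fun U _ => ?_
        rw [Finset.sum_mul]
        refine Finset.sum_congr rfl fun T _ => ?_
        rw [Finset.sum_mul, Finset.mul_sum]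
    _ = ∑ U : Finset α, (if U = S then (1:ℝ) else 0) * ((if U = S then (1:ℝ) else 0) * mob z U) := by
        refine Finset.sum_congr rfl fun U _ => ?_
        rw [alt_sum1]
    _ = mob z S := by simp

lemma mob_nonneg_of_psd {α : Type*} [Fintype α] [DecidableEq α] {t : ℕ} (z : Finset α → ℝ)
    (h : (momentMatrix z t).PosSemidef) (ht : ∀ I : Finset α, I.card ≤ t) (S : Finset α) :
    0 ≤ mob z S := by
  have h2 := h.dotProduct_mulVec_nonneg (fun I : {I : Finset α // I.card ≤ t} => wvec S I.1)
  rw [mob_eq_quad]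
  refine le_trans h2 (le_of_eq ?_)
  rw [dotProduct]
  refine Fintype.sum_equiv (Equiv.subtypeUnivEquiv ht) _ _ fun I => ?_
  simp only [star_trivial, Matrix.mulVec, dotProduct, momentMatrix,
    Equiv.subtypeUnivEquiv, Equiv.coe_fn_mk]
  congr 1
  refine Fintype.sum_equiv (Equiv.subtypeUnivEquiv ht) _ _ fun J => ?_
  rfl



lemma mob_insert {α : Type*} [Fintype α] [DecidableEq α] (z : Finset α → ℝ) (S : Finset α)
    (i : α) :
    (∑ T : Finset α, if S ⊆ T then (-1 : ℝ) ^ ((T \ S).card) * z (insert i T) else 0)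
      = if i ∈ S then mob z S else 0 := by
  have step : ∀ T : Finset α, (if S ⊆ T then (-1 : ℝ) ^ ((T \ S).card) * z (insert i T) else 0)
      = ∑ U : Finset α,
          (if S ⊆ T ∧ T ⊆ U then (-1 : ℝ) ^ ((T \ S).card) else 0) *
          (if i ∈ U then mob z U else 0) := by
    intro T
    rw [mob_inversion z (insert i T)]
    split_ifs with h
    · rw [Finset.mul_sum]
      refine Finset.sum_congr rfl fun U _ => ?_
      by_cases h2 : T ⊆ U <;> by_cases h3 : i ∈ U <;>
        simp [h, h2, h3, Finset.insert_subset_iff]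
    · rw [Finset.sum_eq_zero]
      intro U _
      simp [h]
  rw [Finset.sum_congr rfl (fun T _ => step T), Finset.sum_comm]
  have : ∀ U : Finset α,
      (∑ T : Finset α, (if S ⊆ T ∧ T ⊆ U then (-1 : ℝ) ^ ((T \ S).card) else 0) *
        (if i ∈ U then mob z U else 0))
      = (if U = S then 1 else 0) * (if i ∈ U then mob z U else 0) := by
    intro U
    rw [← Finset.sum_mul, alt_sum1]
  rw [Finset.sum_congr rfl (fun U _ => this U)]
  simp only [ite_mul, one_mul, zero_mul]
  have h3 : ∀ x : Finset α, (if x = S then if i ∈ x then mob z x else 0 else 0)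
      = if x = S then (if i ∈ S then mob z S else 0) else 0 := by
    intro x; by_cases hx : x = S
    · subst hx; rfl
    · simp [hx]
  rw [Finset.sum_congr rfl fun x _ => h3 x, Finset.sum_ite_eq' Finset.univ S]
  simp

lemma mob_shift {α ι : Type*} [Fintype α] [DecidableEq α]
    (A : ι → α → ℝ) (b : ι → ℝ) (ℓ : ι) (z : Finset α → ℝ) (S : Finset α) :
    mob (shiftVec A b ℓ z) S = ((∑ i ∈ S, A ℓ i) - b ℓ) * mob z S := by
  have expand : ∀ T : Finset α,
      (if S ⊆ T then (-1 : ℝ) ^ ((T \ S).card) * shiftVec A b ℓ z T else 0)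
      = (∑ i : α, A ℓ i * (if S ⊆ T then (-1 : ℝ) ^ ((T \ S).card) * z (insert i T) else 0))
        - b ℓ * (if S ⊆ T then (-1 : ℝ) ^ ((T \ S).card) * z T else 0) := by
    intro T
    split_ifs with h
    · simp only [shiftVec, mul_sub, Finset.mul_sum]
      congr 1
      · exact Finset.sum_congr rfl fun i _ => by ring
      · ring
    · simp
  rw [mob, Finset.sum_congr rfl (fun T _ => expand T), Finset.sum_sub_distrib, Finset.sum_comm]
  rw [← Finset.mul_sum]
  have : ∀ i : α,
      (∑ T : Finset α, A ℓ i * (if S ⊆ T then (-1 : ℝ) ^ ((T \ S).card) * z (insert i T) else 0))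
      = A ℓ i * (if i ∈ S then mob z S else 0) := by
    intro i
    rw [← Finset.mul_sum, mob_insert]
  rw [Finset.sum_congr rfl (fun i _ => this i)]
  have : (∑ i : α, A ℓ i * (if i ∈ S then mob z S else 0)) = (∑ i ∈ S, A ℓ i) * mob z S := by
    simp only [mul_ite, mul_zero]
    rw [Finset.sum_ite_mem, Finset.univ_inter, Finset.sum_mul]
  rw [this, ← mob]
  ring


end MobiusAux

/-- Convergence of the Lasserre hierarchy: every `y ∈ Las_n(K)` is a convex combination of
moment vectors of integral feasible points. -/
theorem lasserre_convergence (n m : ℕ) (A : Matrix (Fin m) (Fin n) ℝ) (b : Fin m → ℝ)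
    (y : Finset (Fin n) → ℝ) (hy : IsLasserre (fun ℓ i => A ℓ i) b n y) :
    ∃ (N : ℕ) (lam : Fin N → ℝ) (x : Fin N → Fin n → ℝ),
      (∀ j, ∀ i, x j i = 0 ∨ x j i = 1) ∧
      (∀ j, memK A b (x j)) ∧
      (∀ j, 0 ≤ lam j) ∧ (∑ j, lam j = 1) ∧
      (∀ I : Finset (Fin n), y I = ∑ j, lam j * ∏ i ∈ I, x j i) := by
  classical
  obtain ⟨hy0, hyM, hyS⟩ := hy
  have hcard : ∀ I : Finset (Fin n), I.card ≤ n := fun I => by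
    have := Finset.card_le_univ I
    simpa [Finset.card_univ] using this
  -- nonnegativity of Möbius coefficients
  have hlam : ∀ S : Finset (Fin n), 0 ≤ mob y S :=
    mob_nonneg_of_psd y hyM (fun I => (hcard I).trans (Nat.le_succ n))
  -- feasibility at positive weights
  have hfeas : ∀ S : Finset (Fin n), 0 < mob y S → ∀ ℓ : Fin m, b ℓ ≤ ∑ i ∈ S, A ℓ i := by
    intro S hS ℓ
    have h1 : 0 ≤ mob (shiftVec (fun ℓ i => A ℓ i) b ℓ y) S :=
      mob_nonneg_of_psd _ (hyS ℓ) hcard S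
    rw [mob_shift] at h1
    by_contra hcon
    push_neg at hcon
    have : ((∑ i ∈ S, A ℓ i) - b ℓ) * mob y S < 0 :=
      mul_neg_of_neg_of_pos (by linarith) hS
    linarith
  -- sum of Möbius coefficients is 1
  have hsum1 : ∑ S : Finset (Fin n), mob y S = 1 := by
    have h0 := mob_inversion y ∅
    rw [hy0] at h0
    calc ∑ S : Finset (Fin n), mob y S
        = ∑ S : Finset (Fin n), if ∅ ⊆ S then mob y S else 0 :=
          Finset.sum_congr rfl fun S _ => by simp
      _ = 1 := h0.symm
  -- set up the indexing
  set s : Finset (Finset (Fin n)) := Finset.univ.filter (fun S => 0 < mob y S) with hs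
  have hmemS : ∀ S : Finset (Fin n), S ∈ s ↔ 0 < mob y S := by
    intro S; simp [hs]
  set e := s.equivFin with he
  refine ⟨s.card, fun j => mob y (e.symm j).1,
    fun j i => if i ∈ (e.symm j).1 then 1 else 0, ?_, ?_, ?_, ?_, ?_⟩
  · intro j i
    by_cases h : i ∈ (e.symm j).1 <;> simp [h]
  · intro j ℓ
    have hj : (e.symm j).1 ∈ s := (e.symm j).2
    have hpos : 0 < mob y (e.symm j).1 := (hmemS _).1 hj
    have := hfeas _ hpos ℓ
    calc b ℓ ≤ ∑ i ∈ (e.symm j).1, A ℓ i := this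
      _ = ∑ i, A ℓ i * (if i ∈ (e.symm j).1 then 1 else 0) := by
        simp only [mul_ite, mul_one, mul_zero]
        rw [Finset.sum_ite_mem, Finset.univ_inter]
  · intro j
    exact hlam _
  · -- sum of lambdas is 1
    have h1 : ∑ j : Fin s.card, mob y (e.symm j).1 = ∑ a : {x // x ∈ s}, mob y a.1 :=
      Fintype.sum_equiv e.symm _ _ fun j => rfl
    have h2 : ∑ a : {x // x ∈ s}, mob y a.1 = ∑ S ∈ s, mob y S := by
      exact Finset.sum_coe_sort s (fun S => mob y S)
    have h3 : ∑ S ∈ s, mob y S = ∑ S : Finset (Fin n), mob y S := by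
      refine Finset.sum_subset (Finset.subset_univ s) ?_
      intro S _ hSs
      have h4 : ¬ 0 < mob y S := fun h => hSs ((hmemS S).2 h)
      linarith [hlam S]
    rw [h1, h2, h3, hsum1]
  · -- the moment identity
    intro I
    have hprod : ∀ S : Finset (Fin n),
        (∏ i ∈ I, (if i ∈ S then (1:ℝ) else 0)) = if I ⊆ S then 1 else 0 := by
      intro S
      by_cases h : I ⊆ S
      · rw [if_pos h, Finset.prod_eq_one]
        intro i hi
        rw [if_pos (h hi)]
      · rw [if_neg h]
        obtain ⟨i, hiI, hiS⟩ := Finset.not_subset.1 h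
        exact Finset.prod_eq_zero hiI (by rw [if_neg hiS])
    have h1 : ∑ j : Fin s.card,
        mob y (e.symm j).1 * ∏ i ∈ I, (if i ∈ (e.symm j).1 then (1:ℝ) else 0)
        = ∑ a : {x // x ∈ s}, mob y a.1 * ∏ i ∈ I, (if i ∈ a.1 then (1:ℝ) else 0) :=
      Fintype.sum_equiv e.symm _ _ fun j => rfl
    have h2 : ∑ a : {x // x ∈ s}, mob y a.1 * ∏ i ∈ I, (if i ∈ a.1 then (1:ℝ) else 0)
        = ∑ S ∈ s, mob y S * ∏ i ∈ I, (if i ∈ S then (1:ℝ) else 0) := by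
      exact Finset.sum_coe_sort s (fun S => mob y S * ∏ i ∈ I, (if i ∈ S then (1:ℝ) else 0))
    have h3 : ∑ S ∈ s, mob y S * ∏ i ∈ I, (if i ∈ S then (1:ℝ) else 0)
        = ∑ S : Finset (Fin n), mob y S * ∏ i ∈ I, (if i ∈ S then (1:ℝ) else 0) := by
      refine Finset.sum_subset (Finset.subset_univ s) ?_
      intro S _ hSs
      have h4 : ¬ 0 < mob y S := fun h => hSs ((hmemS S).2 h)
      have h5 : mob y S = 0 := le_antisymm (not_lt.1 h4) (hlam S)
      rw [h5, zero_mul]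
    rw [h1, h2, h3]
    rw [Finset.sum_congr rfl fun S (_ : S ∈ Finset.univ) => by rw [hprod S]]
    rw [mob_inversion y I]
    refine Finset.sum_congr rfl fun S _ => ?_
    by_cases h : I ⊆ S <;> simp [h]
end

section
/- (PSD is preserved under conditioning.) Let 𝒯 be a family of subsets of [n], let X ⊆ S ⊆ [n], and let y be a real vector indexed by all subsets of [n]. Define 𝒯⊖S := {I ∈ 𝒯 : I ∪ J ∈ 𝒯 for all J ⊆ S} and z_I := Σ_{H ⊆ S∖X} (−1)^{|H|} · y_{I ∪ X ∪ H}. If the matrix with rows and columns indexed by 𝒯 and entries y_{I∪J} is positive semidefinite, then the matrix with rows and columns indexed by 𝒯⊖S and entries z_{I∪J} is positive semidefinite. -/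
open Finset

/-- The moment matrix of `y` indexed by a family `𝒯` of subsets of `[n]`. -/
def momM (n : ℕ) (T : Finset (Finset (Fin n))) (y : Finset (Fin n) → ℝ) :
    Matrix {I // I ∈ T} {I // I ∈ T} ℝ :=
  Matrix.of fun I J => y (I.1 ∪ J.1)

/-- `𝒯 ⊖ S := {I ∈ 𝒯 : I ∪ J ∈ 𝒯 for all J ⊆ S}`. -/
def famOminus (n : ℕ) (T : Finset (Finset (Fin n))) (S : Finset (Fin n)) :
    Finset (Finset (Fin n)) :=
  T.filter fun I => ∀ J ∈ S.powerset, I ∪ J ∈ T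

/-- The conditioning `{y}_{X, −S∖X}` with entries `Σ_{H ⊆ S∖X} (−1)^{|H|} y_{I ∪ X ∪ H}`. -/
def conditioning (n : ℕ) (y : Finset (Fin n) → ℝ) (X S : Finset (Fin n)) :
    Finset (Fin n) → ℝ :=
  fun I => ∑ H ∈ (S \ X).powerset, (-1 : ℝ) ^ H.card * y (I ∪ X ∪ H)

section Aux

variable {n : ℕ}

lemma sign_sum_real (D : Finset (Fin n)) :
    (∑ A ∈ D.powerset, (-1 : ℝ) ^ A.card) = if D = ∅ then 1 else 0 := by
  have h := Finset.sum_powerset_neg_one_pow_card (x := D)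
  calc (∑ A ∈ D.powerset, (-1 : ℝ) ^ A.card)
      = ((∑ A ∈ D.powerset, (-1 : ℤ) ^ A.card : ℤ) : ℝ) := by push_cast; rfl
    _ = _ := by rw [h]; split <;> simp

lemma split_powerset (H D : Finset (Fin n)) (hH : H ⊆ D) (g : Finset (Fin n) → ℝ) :
    ∑ H' ∈ D.powerset, g H' = ∑ A ∈ H.powerset, ∑ B ∈ (D \ H).powerset, g (A ∪ B) := by
  rw [← Finset.sum_product']
  refine Finset.sum_nbij' (fun H' => (H' ∩ H, H' \ H)) (fun p => p.1 ∪ p.2) ?_ ?_ ?_ ?_ ?_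
  · intro a ha
    simp only [Finset.mem_powerset] at ha
    simp only [Finset.mem_product, Finset.mem_powerset]
    refine ⟨Finset.inter_subset_right, fun x hx => ?_⟩
    simp only [Finset.mem_sdiff] at hx ⊢
    exact ⟨ha hx.1, hx.2⟩
  · intro p hp
    simp only [Finset.mem_product, Finset.mem_powerset] at hp
    simp only [Finset.mem_powerset]
    exact Finset.union_subset (hp.1.trans hH) (hp.2.trans Finset.sdiff_subset)
  · intro a _
    show a ∩ H ∪ a \ H = a
    rw [Finset.union_comm]
    exact Finset.sdiff_union_inter a H
  · intro p hp
    simp only [Finset.mem_product, Finset.mem_powerset] at hp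
    have h1 : ∀ x ∈ p.2, x ∉ H := fun x hx => (Finset.mem_sdiff.mp (hp.2 hx)).2
    show ((p.1 ∪ p.2) ∩ H, (p.1 ∪ p.2) \ H) = p
    ext1
    · ext x
      simp only [Finset.mem_inter, Finset.mem_union]
      constructor
      · rintro ⟨h1' | h1', h2⟩
        · exact h1'
        · exact absurd h2 (h1 x h1')
      · intro hx; exact ⟨Or.inl hx, hp.1 hx⟩
    · ext x
      simp only [Finset.mem_sdiff, Finset.mem_union]
      constructor
      · rintro ⟨h1' | h1', h2⟩
        · exact absurd (hp.1 h1') h2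
        · exact h1'
      · intro hx
        exact ⟨Or.inr hx, h1 x hx⟩
  · intro a ha
    show g a = g (a ∩ H ∪ a \ H)
    rw [Finset.union_comm, Finset.sdiff_union_inter]

lemma double_sign (D : Finset (Fin n)) (f : Finset (Fin n) → ℝ) :
    ∑ H ∈ D.powerset, ∑ H' ∈ D.powerset,
        ((-1 : ℝ) ^ H.card * (-1 : ℝ) ^ H'.card) * f (H ∪ H')
      = ∑ K ∈ D.powerset, (-1 : ℝ) ^ K.card * f K := by
  have step : ∀ H ∈ D.powerset,
      (∑ H' ∈ D.powerset, ((-1 : ℝ) ^ H.card * (-1 : ℝ) ^ H'.card) * f (H ∪ H'))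
        = (-1 : ℝ) ^ H.card * ((∑ A ∈ H.powerset, (-1 : ℝ) ^ A.card) *
            ∑ B ∈ (D \ H).powerset, (-1 : ℝ) ^ B.card * f (H ∪ B)) := by
    intro H hH
    rw [Finset.mem_powerset] at hH
    rw [split_powerset H D hH (fun H' => ((-1 : ℝ) ^ H.card * (-1 : ℝ) ^ H'.card) * f (H ∪ H'))]
    rw [Finset.sum_mul_sum H.powerset (D \ H).powerset (fun A => (-1 : ℝ) ^ A.card)
      (fun B => (-1 : ℝ) ^ B.card * f (H ∪ B)), Finset.mul_sum]
    refine Finset.sum_congr rfl fun A hA => ?_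
    rw [Finset.mul_sum]
    refine Finset.sum_congr rfl fun B hB => ?_
    rw [Finset.mem_powerset] at hA hB
    have hdisj : Disjoint A B :=
      Finset.disjoint_left.mpr fun _ hxA hxB => (Finset.mem_sdiff.mp (hB hxB)).2 (hA hxA)
    have hcard : (A ∪ B).card = A.card + B.card := Finset.card_union_of_disjoint hdisj
    have hun : H ∪ (A ∪ B) = H ∪ B := by
      rw [← Finset.union_assoc, Finset.union_eq_left.mpr hA]
    rw [hcard, hun, pow_add]
    ring
  rw [Finset.sum_congr rfl step]
  rw [Finset.sum_eq_single ∅]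
  · simp [sign_sum_real]
  · intro H hH hne
    rw [sign_sum_real]
    simp [hne]
  · simp

end Aux

/-- PSD-ness is preserved under conditioning: if `M_𝒯(y) ⪰ 0` then
`M_{𝒯⊖S}({y}_{X,−S∖X}) ⪰ 0` for any `X ⊆ S`. -/
theorem conditioning_posSemidef (n : ℕ) (T : Finset (Finset (Fin n)))
    (X S : Finset (Fin n)) (hXS : X ⊆ S) (y : Finset (Fin n) → ℝ)
    (hpsd : (momM n T y).PosSemidef) :
    (momM n (famOminus n T S) (conditioning n y X S)).PosSemidef := by
  classical
  set O := famOminus n T S with hO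
  set D := S \ X with hD
  have hmem : ∀ (I : Finset (Fin n)), I ∈ O → ∀ H ∈ D.powerset, I ∪ X ∪ H ∈ T := by
    intro I hI H hH
    rw [hO, famOminus, Finset.mem_filter] at hI
    rw [Finset.mem_powerset] at hH
    have hXH : X ∪ H ⊆ S := Finset.union_subset hXS (hH.trans Finset.sdiff_subset)
    have := hI.2 (X ∪ H) (Finset.mem_powerset.mpr hXH)
    rwa [← Finset.union_assoc] at this
  rw [Matrix.posSemidef_iff_dotProduct_mulVec]
  constructor
  · show Matrix.conjTranspose (momM n O (conditioning n y X S)) = momM n O (conditioning n y X S)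
    ext i j
    simp [momM, Matrix.conjTranspose_apply, Finset.union_comm j.1 i.1]
  · intro x
    set w : {I // I ∈ T} → ℝ := fun K =>
      ∑ I ∈ O.attach, ∑ H ∈ D.powerset,
        if I.1 ∪ X ∪ H = K.1 then (-1 : ℝ) ^ H.card * x I else 0 with hw
    have expand : ∀ g : Finset (Fin n) → ℝ,
        (∑ K ∈ T.attach, w K * g K.1)
          = ∑ I ∈ O.attach, ∑ H ∈ D.powerset,
              ((-1 : ℝ) ^ H.card * x I) * g (I.1 ∪ X ∪ H) := by
      intro g
      have h1 : ∀ K : {I // I ∈ T}, w K * g K.1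
          = ∑ I ∈ O.attach, ∑ H ∈ D.powerset,
              (if I.1 ∪ X ∪ H = K.1 then ((-1 : ℝ) ^ H.card * x I) * g K.1 else 0) := by
        intro K
        rw [hw, Finset.sum_mul]
        refine Finset.sum_congr rfl fun I _ => ?_
        rw [Finset.sum_mul]
        refine Finset.sum_congr rfl fun H _ => ?_
        split <;> simp
      rw [Finset.sum_congr rfl fun K _ => h1 K, Finset.sum_comm]
      refine Finset.sum_congr rfl fun I _ => ?_
      rw [Finset.sum_comm]
      refine Finset.sum_congr rfl fun H hH => ?_
      have hmemT : I.1 ∪ X ∪ H ∈ T := hmem I.1 I.2 H hH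
      rw [Finset.sum_attach T
        (fun A => if I.1 ∪ X ∪ H = A then ((-1 : ℝ) ^ H.card * x I) * g A else 0)]
      rw [Finset.sum_ite_eq T (I.1 ∪ X ∪ H)
        (fun A => ((-1 : ℝ) ^ H.card * x I) * g A), if_pos hmemT]
    have hq := hpsd.dotProduct_mulVec_nonneg w
    have hL : dotProduct (star x) (Matrix.mulVec (momM n O (conditioning n y X S)) x)
        = ∑ I ∈ O.attach, ∑ J ∈ O.attach,
            x I * (conditioning n y X S (I.1 ∪ J.1) * x J) := by
      simp [dotProduct, Matrix.mulVec, momM, Finset.univ_eq_attach, Finset.mul_sum]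
    have hR : dotProduct (star w) (Matrix.mulVec (momM n T y) w)
        = ∑ K ∈ T.attach, w K * (∑ K' ∈ T.attach, y (K.1 ∪ K'.1) * w K') := by
      simp [dotProduct, Matrix.mulVec, momM, Finset.univ_eq_attach]
    have inner : ∀ A : Finset (Fin n),
        (∑ K' ∈ T.attach, y (A ∪ K'.1) * w K')
          = ∑ J ∈ O.attach, ∑ H' ∈ D.powerset,
              ((-1 : ℝ) ^ H'.card * x J) * y (A ∪ (J.1 ∪ X ∪ H')) := by
      intro A
      rw [show (∑ K' ∈ T.attach, y (A ∪ K'.1) * w K')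
          = ∑ K' ∈ T.attach, w K' * y (A ∪ K'.1) from
        Finset.sum_congr rfl fun _ _ => mul_comm _ _]
      exact expand (fun B => y (A ∪ B))
    have hcond : ∀ A : Finset (Fin n), conditioning n y X S A
        = ∑ H ∈ D.powerset, ∑ H' ∈ D.powerset,
            ((-1 : ℝ) ^ H.card * (-1 : ℝ) ^ H'.card) * y (A ∪ X ∪ (H ∪ H')) := by
      intro A
      rw [conditioning]
      exact (double_sign D (fun K => y (A ∪ X ∪ K))).symm
    have key : dotProduct (star x) (Matrix.mulVec (momM n O (conditioning n y X S)) x)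
        = dotProduct (star w) (Matrix.mulVec (momM n T y) w) := by
      rw [hL, hR, expand (fun A => ∑ K' ∈ T.attach, y (A ∪ K'.1) * w K')]
      refine Finset.sum_congr rfl fun I _ => ?_
      rw [show (∑ J ∈ O.attach, x I * (conditioning n y X S (I.1 ∪ J.1) * x J))
          = ∑ H ∈ D.powerset, ∑ J ∈ O.attach, ∑ H' ∈ D.powerset,
              x I * ((((-1 : ℝ) ^ H.card * (-1 : ℝ) ^ H'.card)
                * y ((I.1 ∪ J.1) ∪ X ∪ (H ∪ H'))) * x J) from ?_]
      · refine Finset.sum_congr rfl fun H _ => ?_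
        rw [inner (I.1 ∪ X ∪ H), Finset.mul_sum]
        refine Finset.sum_congr rfl fun J _ => ?_
        rw [Finset.mul_sum]
        refine Finset.sum_congr rfl fun H' _ => ?_
        have hset : (I.1 ∪ J.1) ∪ X ∪ (H ∪ H') = (I.1 ∪ X ∪ H) ∪ (J.1 ∪ X ∪ H') := by
          ext a
          simp only [Finset.mem_union]
          tauto
        rw [hset]
        ring
      · rw [Finset.sum_comm]
        refine Finset.sum_congr rfl fun J _ => ?_
        rw [hcond (I.1 ∪ J.1), Finset.sum_mul, Finset.mul_sum]
        refine Finset.sum_congr rfl fun H _ => ?_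
        rw [Finset.sum_mul, Finset.mul_sum]
    rw [key]
    exact hq
end

section
/- (Feasibility of normalized conditioned solutions.) Let 𝒯₁, 𝒯₂ be families of subsets of [n] both containing ∅, let X ⊆ S ⊆ [n], and let y be a real vector indexed by all subsets of [n] with y_∅ = 1, with M_{𝒯₁}(y) positive semidefinite and M_{𝒯₂}((A_ℓ;b_ℓ)*y) positive semidefinite for all ℓ ∈ [m]. Define z := {y}_{X,−S∖X}. If z_∅ > 0 then w := z/z_∅ satisfies: w_∅ = 1; M_{𝒯₁⊖S}(w) is positive semidefinite; M_{𝒯₂⊖S}((A_ℓ;b_ℓ)*w) is positive semidefinite for all ℓ ∈ [m]; w_I = 1 for every I ⊆ X; and w_I = 0 for every I ⊆ S with I ∩ (S∖X) ≠ ∅. -/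
open Finset

/-- The shift operator `(A_ℓ; b_ℓ) * y`. -/
def shiftOp (n m : ℕ) (A : Matrix (Fin m) (Fin n) ℝ) (b : Fin m → ℝ) (ℓ : Fin m)
    (y : Finset (Fin n) → ℝ) : Finset (Fin n) → ℝ :=
  fun I => (∑ i, A ℓ i * y (insert i I)) - b ℓ * y I

section AuxLemmas
open Matrix

lemma sumB {α : Type*} [DecidableEq α] (D : Finset α) :
    ∀ f : Finset α → ℝ,
      (∑ H ∈ D.powerset, ∑ H' ∈ D.powerset,
        ((-1:ℝ)^H.card * (-1:ℝ)^H'.card) * f (H ∪ H'))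
      = ∑ U ∈ D.powerset, (-1:ℝ)^U.card * f U := by
  induction D using Finset.induction_on with
  | empty => simp
  | @insert a D ha ih =>
    intro f
    have h1 : ∀ H ∈ D.powerset, a ∉ H := fun H hH =>
      fun haH => ha (Finset.mem_powerset.mp hH haH)
    rw [Finset.sum_powerset_insert ha, Finset.sum_powerset_insert ha]
    have e1 : ∀ H ∈ D.powerset,
        (∑ H' ∈ (insert a D).powerset,
          ((-1:ℝ)^H.card * (-1:ℝ)^H'.card) * f (H ∪ H'))
        = (∑ H' ∈ D.powerset, ((-1:ℝ)^H.card * (-1:ℝ)^H'.card) * f (H ∪ H'))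
          - (∑ H' ∈ D.powerset,
              ((-1:ℝ)^H.card * (-1:ℝ)^H'.card) * f (insert a (H ∪ H'))) := by
      intro H hH
      rw [Finset.sum_powerset_insert ha, sub_eq_add_neg, ← Finset.sum_neg_distrib]
      congr 1
      refine Finset.sum_congr rfl fun H' hH' => ?_
      rw [Finset.card_insert_of_notMem (h1 H' hH'), Finset.union_insert]
      ring
    have e2 : ∀ H ∈ D.powerset,
        (∑ H' ∈ (insert a D).powerset,
          ((-1:ℝ)^(insert a H).card * (-1:ℝ)^H'.card) * f (insert a H ∪ H'))
        = -((∑ H' ∈ D.powerset, ((-1:ℝ)^H.card * (-1:ℝ)^H'.card) * f (insert a (H ∪ H'))))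
          + (∑ H' ∈ D.powerset,
              ((-1:ℝ)^H.card * (-1:ℝ)^H'.card) * f (insert a (H ∪ H'))) := by
      intro H hH
      rw [Finset.sum_powerset_insert ha, ← Finset.sum_neg_distrib]
      congr 1
      · refine Finset.sum_congr rfl fun H' hH' => ?_
        rw [Finset.card_insert_of_notMem (h1 H hH), Finset.insert_union]
        ring
      · refine Finset.sum_congr rfl fun H' hH' => ?_
        rw [Finset.card_insert_of_notMem (h1 H hH),
          Finset.card_insert_of_notMem (h1 H' hH'),
          Finset.insert_union, Finset.union_insert, Finset.insert_idem]
        ring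
    rw [Finset.sum_congr rfl e1, Finset.sum_congr rfl e2]
    simp only [neg_add_cancel, Finset.sum_const_zero, add_zero]
    rw [Finset.sum_sub_distrib, ih f, ih (fun U => f (insert a U)),
      sub_eq_add_neg, ← Finset.sum_neg_distrib]
    congr 1
    refine Finset.sum_congr rfl fun t ht => ?_
    rw [Finset.card_insert_of_notMem (h1 t ht)]
    ring

lemma union_shuffle {n : ℕ} (I J X H H' : Finset (Fin n)) :
    (I ∪ X ∪ H) ∪ (J ∪ X ∪ H') = ((I ∪ J) ∪ X) ∪ (H ∪ H') := by
  ext a; simp only [Finset.mem_union]; tauto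

lemma momM_isHermitian (n : ℕ) (T : Finset (Finset (Fin n)))
    (g : Finset (Fin n) → ℝ) : (momM n T g).IsHermitian := by
  show (momM n T g)ᴴ = momM n T g
  ext i j
  simp only [momM, Matrix.conjTranspose_apply, Matrix.of_apply, star_trivial]
  rw [Finset.union_comm]

lemma quad_form (n : ℕ) (T : Finset (Finset (Fin n))) (g : Finset (Fin n) → ℝ)
    (cf : Finset (Fin n) → ℝ) :
    (fun K : {K // K ∈ T} => cf K.1) ⬝ᵥ
      ((momM n T g) *ᵥ (fun K : {K // K ∈ T} => cf K.1))
    = ∑ I ∈ T, ∑ J ∈ T, cf I * cf J * g (I ∪ J) := by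
  calc (fun K : {K // K ∈ T} => cf K.1) ⬝ᵥ
      ((momM n T g) *ᵥ (fun K : {K // K ∈ T} => cf K.1))
      = ∑ I : {K // K ∈ T}, ∑ J : {K // K ∈ T}, cf I.1 * cf J.1 * g (I.1 ∪ J.1) := by
        simp only [dotProduct, Matrix.mulVec, momM, Matrix.of_apply, Finset.mul_sum]
        refine Finset.sum_congr rfl fun I _ => Finset.sum_congr rfl fun J _ => by ring
    _ = ∑ I : {K // K ∈ T}, ∑ J ∈ T, cf I.1 * cf J * g (I.1 ∪ J) := by
        refine Finset.sum_congr rfl fun I _ => ?_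
        rw [Finset.univ_eq_attach]
        exact Finset.sum_attach T (fun J => cf I.1 * cf J * g (I.1 ∪ J))
    _ = ∑ I ∈ T, ∑ J ∈ T, cf I * cf J * g (I ∪ J) := by
        rw [Finset.univ_eq_attach]
        exact Finset.sum_attach T (fun I => ∑ J ∈ T, cf I * cf J * g (I ∪ J))
lemma cond_psd (n : ℕ) (T : Finset (Finset (Fin n))) (X S : Finset (Fin n)) (hXS : X ⊆ S)
    (y : Finset (Fin n) → ℝ) (h : (momM n T y).PosSemidef) (c : ℝ) (hc : 0 ≤ c) :
    (momM n (famOminus n T S) (fun I => c * conditioning n y X S I)).PosSemidef := by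
  classical
  set F := famOminus n T S with hF
  refine Matrix.posSemidef_iff_dotProduct_mulVec.mpr ⟨momM_isHermitian _ _ _, ?_⟩
  intro x
  have hstar : star x = x := star_trivial x
  rw [hstar]
  let cf : Finset (Fin n) → ℝ := fun I => if hI : I ∈ F then x ⟨I, hI⟩ else 0
  have hxcf : x = fun K : {K // K ∈ F} => cf K.1 := by
    funext K
    simp only [cf]
    rw [dif_pos K.2]
  rw [hxcf, quad_form]
  have factor : (∑ I ∈ F, ∑ J ∈ F, cf I * cf J * (c * conditioning n y X S (I ∪ J)))
      = c * ∑ I ∈ F, ∑ J ∈ F, cf I * cf J * conditioning n y X S (I ∪ J) := by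
    rw [Finset.mul_sum]
    refine Finset.sum_congr rfl fun I _ => ?_
    rw [Finset.mul_sum]
    exact Finset.sum_congr rfl fun J _ => by ring
  rw [factor]
  refine mul_nonneg hc ?_
  -- the quadratic form of the conditioned vector equals a quadratic form of y
  set P := F ×ˢ (S \ X).powerset with hP
  set u : Finset (Fin n) → ℝ := fun K =>
    ∑ p ∈ P, if p.1 ∪ X ∪ p.2 = K then (-1:ℝ)^p.2.card * cf p.1 else 0 with hu
  have hmem : ∀ p ∈ P, p.1 ∪ X ∪ p.2 ∈ T := by
    intro p hp
    obtain ⟨hp1, hp2⟩ := Finset.mem_product.mp hp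
    have h1 := (Finset.mem_filter.mp hp1).2
    rw [Finset.union_assoc]
    exact h1 (X ∪ p.2) (Finset.mem_powerset.mpr
      (Finset.union_subset hXS ((Finset.mem_powerset.mp hp2).trans Finset.sdiff_subset)))
  have key : ∀ g : Finset (Fin n) → ℝ,
      (∑ K ∈ T, u K * g K)
      = ∑ p ∈ P, (-1:ℝ)^p.2.card * cf p.1 * g (p.1 ∪ X ∪ p.2) := by
    intro g
    calc (∑ K ∈ T, u K * g K)
        = ∑ K ∈ T, ∑ p ∈ P,
            (if p.1 ∪ X ∪ p.2 = K then (-1:ℝ)^p.2.card * cf p.1 * g K else 0) := by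
          refine Finset.sum_congr rfl fun K _ => ?_
          rw [hu, Finset.sum_mul]
          exact Finset.sum_congr rfl fun p _ => by rw [ite_mul, zero_mul]
      _ = ∑ p ∈ P, ∑ K ∈ T,
            (if p.1 ∪ X ∪ p.2 = K then (-1:ℝ)^p.2.card * cf p.1 * g K else 0) :=
          Finset.sum_comm
      _ = ∑ p ∈ P, (-1:ℝ)^p.2.card * cf p.1 * g (p.1 ∪ X ∪ p.2) := by
          refine Finset.sum_congr rfl fun p hp => ?_
          rw [Finset.sum_ite_eq, if_pos (hmem p hp)]
  have hQ := (Matrix.posSemidef_iff_dotProduct_mulVec.mp h).2 (fun K : {K // K ∈ T} => u K.1)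
  rw [star_trivial, quad_form] at hQ
  have main : (∑ K ∈ T, ∑ K' ∈ T, u K * u K' * y (K ∪ K'))
      = ∑ I ∈ F, ∑ J ∈ F, cf I * cf J * conditioning n y X S (I ∪ J) := by
    calc (∑ K ∈ T, ∑ K' ∈ T, u K * u K' * y (K ∪ K'))
        = ∑ K ∈ T, u K * (∑ K' ∈ T, u K' * y (K ∪ K')) := by
          refine Finset.sum_congr rfl fun K _ => ?_
          rw [Finset.mul_sum]
          exact Finset.sum_congr rfl fun K' _ => by ring
      _ = ∑ p ∈ P, (-1:ℝ)^p.2.card * cf p.1 * (∑ K' ∈ T, u K' * y ((p.1 ∪ X ∪ p.2) ∪ K')) :=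
          key _
      _ = ∑ p ∈ P, ∑ q ∈ P, ((-1:ℝ)^p.2.card * cf p.1) *
            ((-1:ℝ)^q.2.card * cf q.1 * y ((p.1 ∪ X ∪ p.2) ∪ (q.1 ∪ X ∪ q.2))) := by
          refine Finset.sum_congr rfl fun p _ => ?_
          rw [key (fun K' => y ((p.1 ∪ X ∪ p.2) ∪ K')), Finset.mul_sum]
      _ = ∑ I ∈ F, ∑ H ∈ (S \ X).powerset, ∑ J ∈ F, ∑ H' ∈ (S \ X).powerset,
            ((-1:ℝ)^H.card * cf I) *
            ((-1:ℝ)^H'.card * cf J * y ((I ∪ X ∪ H) ∪ (J ∪ X ∪ H'))) := by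
          rw [hP, Finset.sum_product]
          refine Finset.sum_congr rfl fun I _ => Finset.sum_congr rfl fun H _ => ?_
          rw [Finset.sum_product]
      _ = ∑ I ∈ F, ∑ J ∈ F, cf I * cf J * conditioning n y X S (I ∪ J) := by
          refine Finset.sum_congr rfl fun I _ => ?_
          rw [Finset.sum_comm]
          refine Finset.sum_congr rfl fun J _ => ?_
          have inner : (∑ H ∈ (S \ X).powerset, ∑ H' ∈ (S \ X).powerset,
              ((-1:ℝ)^H.card * cf I) *
              ((-1:ℝ)^H'.card * cf J * y ((I ∪ X ∪ H) ∪ (J ∪ X ∪ H'))))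
              = cf I * cf J * (∑ H ∈ (S \ X).powerset, ∑ H' ∈ (S \ X).powerset,
                  ((-1:ℝ)^H.card * (-1:ℝ)^H'.card) * y (((I ∪ J) ∪ X) ∪ (H ∪ H'))) := by
            rw [Finset.mul_sum]
            refine Finset.sum_congr rfl fun H _ => ?_
            rw [Finset.mul_sum]
            refine Finset.sum_congr rfl fun H' _ => ?_
            rw [union_shuffle]
            ring
          rw [inner, sumB ((S : Finset (Fin n)) \ X) (fun U => y (((I ∪ J) ∪ X) ∪ U))]
          rfl
  rw [← main]
  exact hQ
lemma shift_smul (n m : ℕ) (A : Matrix (Fin m) (Fin n) ℝ) (b : Fin m → ℝ) (ℓ : Fin m)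
    (c : ℝ) (f : Finset (Fin n) → ℝ) :
    shiftOp n m A b ℓ (fun I => c * f I) = fun I => c * shiftOp n m A b ℓ f I := by
  funext I
  simp only [shiftOp, mul_sub, Finset.mul_sum]
  congr 1
  · exact Finset.sum_congr rfl fun i _ => by ring
  · ring

lemma shift_cond (n m : ℕ) (A : Matrix (Fin m) (Fin n) ℝ) (b : Fin m → ℝ) (ℓ : Fin m)
    (y : Finset (Fin n) → ℝ) (X S : Finset (Fin n)) :
    shiftOp n m A b ℓ (conditioning n y X S)
      = conditioning n (shiftOp n m A b ℓ y) X S := by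
  funext I
  simp only [shiftOp, conditioning, mul_sub, Finset.mul_sum]
  rw [Finset.sum_sub_distrib, Finset.sum_comm]
  congr 1
  · refine Finset.sum_congr rfl fun H _ => Finset.sum_congr rfl fun i _ => ?_
    rw [Finset.insert_union, Finset.insert_union]
    ring
  · exact Finset.sum_congr rfl fun H _ => by ring

lemma cond_zero (n : ℕ) (y : Finset (Fin n) → ℝ) (X S I : Finset (Fin n))
    (a : Fin n) (haI : a ∈ I) (haD : a ∈ S \ X) :
    conditioning n y X S I = 0 := by
  unfold conditioning
  rw [show S \ X = insert a ((S \ X).erase a) from (Finset.insert_erase haD).symm,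
    Finset.sum_powerset_insert (Finset.notMem_erase a _)]
  have e : ∀ H ∈ ((S \ X).erase a).powerset,
      (-1:ℝ)^(insert a H).card * y (I ∪ X ∪ insert a H)
      = -((-1:ℝ)^H.card * y (I ∪ X ∪ H)) := by
    intro H hH
    have haH : a ∉ H := fun hh => Finset.notMem_erase a _ (Finset.mem_powerset.mp hH hh)
    rw [Finset.card_insert_of_notMem haH, Finset.union_insert,
      Finset.insert_eq_self.mpr (by simp [Finset.mem_union, haI])]
    ring
  rw [Finset.sum_congr rfl e, Finset.sum_neg_distrib, add_neg_cancel]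


end AuxLemmas

/-- Feasibility of normalized conditioned solutions: if `y_∅ = 1`, `M_{𝒯₁}(y) ⪰ 0` and
`M_{𝒯₂}((A_ℓ;b_ℓ)*y) ⪰ 0` for all `ℓ`, and `z := {y}_{X,−S∖X}` has `z_∅ > 0`, then
`w := z / z_∅` satisfies `w_∅ = 1`, `M_{𝒯₁⊖S}(w) ⪰ 0`, `M_{𝒯₂⊖S}((A_ℓ;b_ℓ)*w) ⪰ 0`,
`w_I = 1` for `I ⊆ X`, and `w_I = 0` for `I ⊆ S` meeting `S∖X`. -/
theorem normalized_conditioning_feasible (n m : ℕ)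
    (A : Matrix (Fin m) (Fin n) ℝ) (b : Fin m → ℝ)
    (T1 T2 : Finset (Finset (Fin n))) (hT1 : ∅ ∈ T1) (hT2 : ∅ ∈ T2)
    (X S : Finset (Fin n)) (hXS : X ⊆ S)
    (y : Finset (Fin n) → ℝ) (hy0 : y ∅ = 1)
    (hpsd1 : (momM n T1 y).PosSemidef)
    (hpsd2 : ∀ ℓ : Fin m, (momM n T2 (shiftOp n m A b ℓ y)).PosSemidef)
    (hzpos : 0 < conditioning n y X S ∅)
    (w : Finset (Fin n) → ℝ)
    (hw : ∀ I, w I = conditioning n y X S I / conditioning n y X S ∅) :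
    w ∅ = 1 ∧
    (momM n (famOminus n T1 S) w).PosSemidef ∧
    (∀ ℓ : Fin m, (momM n (famOminus n T2 S) (shiftOp n m A b ℓ w)).PosSemidef) ∧
    (∀ I : Finset (Fin n), I ⊆ X → w I = 1) ∧
    (∀ I : Finset (Fin n), I ⊆ S → (I ∩ (S \ X)).Nonempty → w I = 0) := by
  have hz0 : conditioning n y X S ∅ ≠ 0 := ne_of_gt hzpos
  have hcnn : (0:ℝ) ≤ (conditioning n y X S ∅)⁻¹ := inv_nonneg.mpr hzpos.le
  have hwfun : w = fun I => (conditioning n y X S ∅)⁻¹ * conditioning n y X S I :=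
    funext fun I => by rw [hw I, div_eq_inv_mul]
  refine ⟨?_, ?_, ?_, ?_, ?_⟩
  · rw [hw, div_self hz0]
  · rw [hwfun]
    exact cond_psd n T1 X S hXS y hpsd1 _ hcnn
  · intro ℓ
    rw [hwfun, shift_smul, shift_cond]
    exact cond_psd n T2 X S hXS (shiftOp n m A b ℓ y) (hpsd2 ℓ) _ hcnn
  · intro I hI
    have : conditioning n y X S I = conditioning n y X S ∅ := by
      unfold conditioning
      refine Finset.sum_congr rfl fun H _ => ?_
      rw [Finset.union_eq_right.mpr hI, Finset.empty_union]
    rw [hw, this, div_self hz0]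
  · intro I _ hne
    obtain ⟨a, ha⟩ := hne
    rw [hw, cond_zero n y X S I a (Finset.mem_inter.mp ha).1 (Finset.mem_inter.mp ha).2,
      zero_div]
end

section
/- For every edge e ∈ E lying between levels V_j and V_{j+1} (i.e. e ∈ (V_j × V_{j+1}) ∩ E) and every Lasserre solution Ȳ ∈ Las_{t'}(K) with t' ≥ j, one has Σ_{P ∈ Q(e)} ȳ_P ≤ ȳ_{\{e\}}, where the sum is over all r–v paths P whose last edge is e and ȳ_H denotes the entry of Ȳ indexed by the edge set H. -/
open Finset

/-- An `ℓ`-level Directed Steiner Tree instance: a directed graph on vertex set `V` with edge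
set `E`, root `r`, terminal set `X`, whose vertices are arranged in levels
`V_0 = {r}, V_1, …, V_levels = X` with every edge going from one level to the next. -/
structure DSTInstance (V : Type*) [Fintype V] [DecidableEq V] where
  E : Finset (V × V)
  r : V
  X : Finset V
  levels : ℕ
  level : V → ℕ
  level_le : ∀ v, level v ≤ levels
  level_root : ∀ v, level v = 0 ↔ v = r
  level_terminal : ∀ v, level v = levels ↔ v ∈ X
  edge_level : ∀ e ∈ E, level e.2 = level e.1 + 1

variable {V : Type*} [Fintype V] [DecidableEq V]

/-- LP variables of the Directed Steiner Tree LP: a capacity variable `y_e` for each edge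
`e ∈ E` and a flow variable `f_{s,e}` for each terminal `s ∈ X` and edge `e ∈ E`. -/
def DSTVar (G : DSTInstance V) : Type _ :=
  {e : V × V // e ∈ G.E} ⊕ {p : V × (V × V) // p.1 ∈ G.X ∧ p.2 ∈ G.E}

instance (G : DSTInstance V) : Fintype (DSTVar G) :=
  inferInstanceAs (Fintype ({e : V × V // e ∈ G.E} ⊕ {p : V × (V × V) // p.1 ∈ G.X ∧ p.2 ∈ G.E}))

instance (G : DSTInstance V) : DecidableEq (DSTVar G) :=
  inferInstanceAs (DecidableEq ({e : V × V // e ∈ G.E} ⊕ {p : V × (V × V) // p.1 ∈ G.X ∧ p.2 ∈ G.E}))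

/-- Index type for the linear constraints of the Directed Steiner Tree LP: flow conservation
(for each terminal `s ∈ X` and vertex `v`, two inequalities forming an equality), capacity
constraints `f_{s,e} ≤ y_e`, indegree constraints `Σ_{e ∈ δ⁻(v)} y_e ≤ 1`, and the box
constraints `0 ≤ x ≤ 1` for every variable. -/
def DSTCon (G : DSTInstance V) : Type _ :=
  (({s : V // s ∈ G.X} × V) × Bool) ⊕
  ({p : V × (V × V) // p.1 ∈ G.X ∧ p.2 ∈ G.E} ⊕
  (V ⊕ (DSTVar G × Bool)))

/-- Left-hand side coefficients of the Directed Steiner Tree LP constraints (as `a·x ≥ β`). -/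
def dstA (G : DSTInstance V) : DSTCon G → DSTVar G → ℝ
  | Sum.inl ((s, v), d) => fun w =>
      (if d then (1 : ℝ) else -1) *
        (match w with
          | Sum.inl _ => 0
          | Sum.inr p =>
              if p.1.1 = s.1 then
                (if p.1.2.1 = v then (1 : ℝ) else 0) - (if p.1.2.2 = v then (1 : ℝ) else 0)
              else 0)
  | Sum.inr (Sum.inl p) => fun w =>
      (match w with
        | Sum.inl e => if e.1 = p.1.2 then (1 : ℝ) else 0
        | Sum.inr q => if q.1 = p.1 then (-1 : ℝ) else 0)
  | Sum.inr (Sum.inr (Sum.inl v)) => fun w =>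
      (match w with
        | Sum.inl e => if e.1.2 = v then (-1 : ℝ) else 0
        | Sum.inr _ => 0)
  | Sum.inr (Sum.inr (Sum.inr (w0, d))) => fun w =>
      if w = w0 then (if d then (1 : ℝ) else -1) else 0

/-- Right-hand sides of the Directed Steiner Tree LP constraints (as `a·x ≥ β`). -/
def dstb (G : DSTInstance V) : DSTCon G → ℝ
  | Sum.inl ((s, v), d) =>
      (if d then (1 : ℝ) else -1) *
        (if v = G.r then 1 else if v = s.1 then -1 else 0)
  | Sum.inr (Sum.inl _) => 0
  | Sum.inr (Sum.inr (Sum.inl _)) => -1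
  | Sum.inr (Sum.inr (Sum.inr (_, d))) => if d then (0 : ℝ) else -1

/-- `IsRPath G P v`: the edge set `P` is a directed path from the root `r` to `v` in `G`. -/
inductive IsRPath (G : DSTInstance V) : Finset (V × V) → V → Prop
  | nil : IsRPath G ∅ G.r
  | cons {P : Finset (V × V)} {u v : V} :
      IsRPath G P u → (u, v) ∈ G.E → IsRPath G (insert (u, v) P) v

/-- The set of Lasserre variables corresponding to the capacity variables `y_e`, `e ∈ P`. -/
def edgeVars (G : DSTInstance V) (P : Finset (V × V)) : Finset (DSTVar G) :=
  ((Finset.univ : Finset {e : V × V // e ∈ G.E}).filter (fun e => e.1 ∈ P)).image Sum.inl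

/-! ### Auxiliary lemmas -/

/-- The capacity variable `y_e` as an element of `DSTVar G`. -/
def edgeVar (G : DSTInstance V) (e : {e : V × V // e ∈ G.E}) : DSTVar G := Sum.inl e

lemma myPosSemidef_diag_nonneg {n : Type*} [Fintype n] [DecidableEq n] {M : Matrix n n ℝ}
    (h : M.PosSemidef) (i : n) : 0 ≤ M i i := by
  simpa using h.2 (Finsupp.single i 1)

lemma lasserre_shift_nonneg {α ι : Type*} [Fintype α] [DecidableEq α]
    {A : ι → α → ℝ} {b : ι → ℝ} {t : ℕ} {y : Finset α → ℝ}
    (hY : IsLasserre A b t y) (ℓ : ι) (I : Finset α) (hI : I.card ≤ t) :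
    b ℓ * y I ≤ ∑ i, A ℓ i * y (insert i I) := by
  have h := myPosSemidef_diag_nonneg (hY.2.2 ℓ) ⟨I, hI⟩
  simp only [momentMatrix, shiftVec, Finset.union_self] at h
  linarith

/-- The indegree constraint, shifted by a set `I` of size at most `t'`. -/
lemma indegree_bound (G : DSTInstance V) {t' : ℕ} {Y : Finset (DSTVar G) → ℝ}
    (hY : IsLasserre (dstA G) (dstb G) t' Y) (v : V) (I : Finset (DSTVar G))
    (hI : I.card ≤ t') :
    ∑ e : {e : V × V // e ∈ G.E},
      (if e.1.2 = v then Y (insert (Sum.inl e) I) else 0) ≤ Y I := by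
  have h := lasserre_shift_nonneg hY (Sum.inr (Sum.inr (Sum.inl v))) I hI
  have hsplit : (∑ i : DSTVar G, dstA G (Sum.inr (Sum.inr (Sum.inl v))) i * Y (insert i I))
      = (∑ e : {e : V × V // e ∈ G.E},
          dstA G (Sum.inr (Sum.inr (Sum.inl v))) (Sum.inl e) * Y (insert (Sum.inl e) I))
      + ∑ p : {p : V × (V × V) // p.1 ∈ G.X ∧ p.2 ∈ G.E},
          dstA G (Sum.inr (Sum.inr (Sum.inl v))) (Sum.inr p) * Y (insert (Sum.inr p) I) :=
    Fintype.sum_sum_type _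
  rw [hsplit] at h
  simp only [dstA] at h
  simp only [ite_mul, neg_mul, one_mul, zero_mul, mul_zero, Finset.sum_const_zero, add_zero,
    dstb, neg_one_mul] at h
  have : (∑ e : {e : V × V // e ∈ G.E},
      if e.1.2 = v then -Y (insert (Sum.inl e) I) else 0)
      = -∑ e : {e : V × V // e ∈ G.E},
          (if e.1.2 = v then Y (insert (Sum.inl e) I) else 0) := by
    rw [← Finset.sum_neg_distrib]
    exact Finset.sum_congr rfl fun e _ => by split <;> simp
  rw [this] at h
  linarith

lemma IsRPath.head_level_le {G : DSTInstance V} {P : Finset (V × V)} {v : V}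
    (h : IsRPath G P v) : ∀ p ∈ P, G.level p.2 ≤ G.level v := by
  induction h with
  | nil => simp
  | @cons P u w h he ih =>
    intro p hp
    have hlev : G.level w = G.level u + 1 := G.edge_level (u, w) he
    rcases Finset.mem_insert.1 hp with rfl | hp
    · exact le_refl _
    · exact le_trans (ih p hp) (by omega)

lemma IsRPath.not_mem {G : DSTInstance V} {P : Finset (V × V)} {u : V}
    (h : IsRPath G P u) {e : V × V} (he : G.level u < G.level e.2) : e ∉ P :=
  fun hm => absurd (h.head_level_le e hm) (not_le.2 he)

lemma isRPath_level_zero {G : DSTInstance V} {P : Finset (V × V)} {v : V}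
    (hv : G.level v = 0) : IsRPath G P v ↔ P = ∅ := by
  constructor
  · intro h
    cases h with
    | nil => rfl
    | cons h he =>
      rename_i P u
      have h2 : G.level v = G.level u + 1 := G.edge_level (u, v) he
      omega
  · rintro rfl
    have : v = G.r := (G.level_root v).1 hv
    subst this
    exact IsRPath.nil

lemma isRPath_level_succ {G : DSTInstance V} {P : Finset (V × V)} {v : V} {j : ℕ}
    (hv : G.level v = j + 1) :
    IsRPath G P v ↔ ∃ e' : {e : V × V // e ∈ G.E}, e'.1.2 = v ∧
      ∃ P' : Finset (V × V), IsRPath G P' e'.1.1 ∧ P = insert e'.1 P' := by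
  constructor
  · intro h
    cases h with
    | nil =>
      have : G.level G.r = 0 := (G.level_root G.r).2 rfl
      omega
    | cons h he =>
      rename_i P u
      exact ⟨⟨(u, v), he⟩, rfl, P, h, rfl⟩
  · rintro ⟨⟨⟨u, w⟩, he⟩, hw, P', hP', rfl⟩
    subst hw
    exact hP'.cons he

lemma edgeVars_empty (G : DSTInstance V) : edgeVars G ∅ = ∅ := by
  simp [edgeVars]
  exact Finset.image_empty _

lemma edgeVars_insert (G : DSTInstance V) {e : V × V} (he : e ∈ G.E) (P : Finset (V × V)) :
    edgeVars G (insert e P) = insert (edgeVar G ⟨e, he⟩) (edgeVars G P) := by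
  ext w
  rw [Finset.mem_insert]
  unfold edgeVars
  constructor
  · intro hw
    obtain ⟨a, ha, rfl⟩ := Finset.mem_image.1 hw
    simp only [Finset.mem_filter, Finset.mem_univ, true_and, Finset.mem_insert] at ha
    rcases ha with ha | ha
    · left; exact congrArg Sum.inl (Subtype.ext ha)
    · right; exact Finset.mem_image.2 ⟨a, by simpa using ha, rfl⟩
  · rintro (h | h)
    · subst h; exact Finset.mem_image.2 ⟨⟨e, he⟩, by simp, rfl⟩
    · obtain ⟨a, ha, rfl⟩ := Finset.mem_image.1 h
      exact Finset.mem_image.2 ⟨a, by simp at ha ⊢; exact Or.inr ha, rfl⟩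

lemma edgeVars_singleton (G : DSTInstance V) {e : V × V} (he : e ∈ G.E) :
    edgeVars G {e} = {edgeVar G ⟨e, he⟩} := by
  rw [show ({e} : Finset (V × V)) = insert e ∅ from rfl, edgeVars_insert G he,
    edgeVars_empty]
  rfl

open Classical in
/-- Key inductive lemma: the sum of `Y (edgeVars P ∪ K)` over all root-paths `P` to a vertex
`v` at level `j` is at most `Y K`, provided `K.card + j ≤ t' + 1`. -/
lemma sum_paths_le_key (G : DSTInstance V) {t' : ℕ} {Y : Finset (DSTVar G) → ℝ}
    (hY : IsLasserre (dstA G) (dstb G) t' Y) :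
    ∀ (j : ℕ) (v : V), G.level v = j → ∀ K : Finset (DSTVar G), K.card + j ≤ t' + 1 →
      ∑ P ∈ Finset.univ.filter (fun P : Finset (V × V) => IsRPath G P v),
        Y (edgeVars G P ∪ K) ≤ Y K := by
  intro j
  induction j with
  | zero =>
    intro v hv K hK
    have hfil : Finset.univ.filter (fun P : Finset (V × V) => IsRPath G P v) = {∅} := by
      ext P
      simp [isRPath_level_zero hv]
    rw [hfil]
    simp [edgeVars_empty]
  | succ j ih =>
    intro v hv K hK
    set S : Finset {e : V × V // e ∈ G.E} :=
      Finset.univ.filter (fun e' : {e : V × V // e ∈ G.E} => e'.1.2 = v) with hS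
    have hlevS : ∀ e' ∈ S, G.level e'.1.1 = j := by
      intro e' he'
      have h1 : e'.1.2 = v := (Finset.mem_filter.1 he').2
      have h2 := G.edge_level e'.1 e'.2
      rw [h1] at h2
      omega
    have hnotmem : ∀ e' ∈ S, ∀ P' : Finset (V × V), IsRPath G P' e'.1.1 → e'.1 ∉ P' := by
      intro e' he' P' hP'
      refine hP'.not_mem ?_
      have h1 : e'.1.2 = v := (Finset.mem_filter.1 he').2
      rw [h1, hlevS e' he', hv]
      omega
    have hfil : Finset.univ.filter (fun P : Finset (V × V) => IsRPath G P v)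
        = S.biUnion (fun e' =>
            (Finset.univ.filter (fun P' : Finset (V × V) => IsRPath G P' e'.1.1)).image
              (insert e'.1)) := by
      ext P
      simp only [Finset.mem_biUnion, Finset.mem_filter, Finset.mem_univ, true_and,
        Finset.mem_image, hS]
      rw [isRPath_level_succ hv]
      constructor
      · rintro ⟨e', hev, P', hP', rfl⟩
        exact ⟨e', hev, P', hP', rfl⟩
      · rintro ⟨e', hev, P', hP', rfl⟩
        exact ⟨e', hev, P', hP', rfl⟩
    have hdisj : (S : Set {e : V × V // e ∈ G.E}).PairwiseDisjoint (fun e' =>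
        (Finset.univ.filter (fun P' : Finset (V × V) => IsRPath G P' e'.1.1)).image
          (insert e'.1)) := by
      intro a ha b hb hab
      simp only [Finset.disjoint_left, Finset.mem_image, Finset.mem_filter, Finset.mem_univ,
        true_and]
      rintro P ⟨P₁, hP₁, rfl⟩ ⟨P₂, hP₂, hP₂eq⟩
      have haS : a ∈ S := ha
      have hbS : b ∈ S := hb
      have hav : a.1.2 = v := (Finset.mem_filter.1 haS).2
      have hbv : b.1.2 = v := (Finset.mem_filter.1 hbS).2
      have hane : a.1 ≠ b.1 := fun h => hab (Subtype.ext h)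
      have : a.1 ∈ insert b.1 P₂ := by rw [hP₂eq]; exact Finset.mem_insert_self _ _
      rcases Finset.mem_insert.1 this with h | h
      · exact hane h
      · have := hP₂.head_level_le a.1 h
        rw [hav, hv, hlevS b hbS] at this
        omega
    rw [hfil, Finset.sum_biUnion hdisj]
    have hstep : ∀ e' ∈ S,
        (∑ P ∈ (Finset.univ.filter
            (fun P' : Finset (V × V) => IsRPath G P' e'.1.1)).image (insert e'.1),
          Y (edgeVars G P ∪ K)) ≤ Y (insert (Sum.inl e') K) := by
      intro e' he'
      rw [Finset.sum_image (by
        intro P₁ h₁ P₂ h₂ heq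
        have h₁' : IsRPath G P₁ e'.1.1 := by
          simpa using (Finset.mem_filter.1 h₁).2
        have h₂' : IsRPath G P₂ e'.1.1 := by
          simpa using (Finset.mem_filter.1 h₂).2
        have n₁ := hnotmem e' he' P₁ h₁'
        have n₂ := hnotmem e' he' P₂ h₂'
        rw [← Finset.erase_insert n₁, ← Finset.erase_insert n₂, heq])]
      have hrw : ∀ P' ∈ Finset.univ.filter
          (fun P' : Finset (V × V) => IsRPath G P' e'.1.1),
          Y (edgeVars G (insert e'.1 P') ∪ K)
            = Y (edgeVars G P' ∪ insert (edgeVar G e') K) := by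
        intro P' _
        rw [edgeVars_insert G e'.2, Finset.insert_union, Finset.union_insert]
      rw [Finset.sum_congr rfl hrw]
      exact ih e'.1.1 (hlevS e' he') (insert (edgeVar G e') K)
        (by have := Finset.card_insert_le (edgeVar G e') K; omega)
    calc (∑ e' ∈ S, ∑ P ∈ (Finset.univ.filter
            (fun P' : Finset (V × V) => IsRPath G P' e'.1.1)).image (insert e'.1),
          Y (edgeVars G P ∪ K))
        ≤ ∑ e' ∈ S, Y (insert (Sum.inl e') K) := Finset.sum_le_sum hstep
      _ = ∑ e' : {e : V × V // e ∈ G.E},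
            (if e'.1.2 = v then Y (insert (Sum.inl e') K) else 0) := by
          rw [hS, Finset.sum_filter]
      _ ≤ Y K := indegree_bound G hY v K (by omega)

open Classical in
/-- For any edge `e` between levels `V_j` and `V_{j+1}` and any Lasserre solution
`Ȳ ∈ Las_{t'}(K)` with `t' ≥ j`, one has `Σ_{P ∈ Q(e)} ȳ_P ≤ ȳ_{{e}}`, where `Q(e)` is
the set of root-paths whose last edge is `e`. -/
theorem sum_paths_ending_at_edge_le (G : DSTInstance V) (e : V × V) (he : e ∈ G.E)
    (j t' : ℕ) (hj : G.level e.1 = j) (ht : j ≤ t')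
    (Y : Finset (DSTVar G) → ℝ) (hY : IsLasserre (dstA G) (dstb G) t' Y) :
    ∑ P ∈ Finset.univ.filter
        (fun P : Finset (V × V) => ∃ P' : Finset (V × V), IsRPath G P' e.1 ∧ P = insert e P'),
      Y (edgeVars G P)
      ≤ Y (edgeVars G {e}) := by
  classical
  have hlev2 : G.level e.2 = j + 1 := by rw [G.edge_level e he, hj]
  have hnot : ∀ P' : Finset (V × V), IsRPath G P' e.1 → e ∉ P' := fun P' hP' =>
    hP'.not_mem (by rw [hj, hlev2]; omega)
  have hfil : Finset.univ.filter
        (fun P : Finset (V × V) => ∃ P' : Finset (V × V), IsRPath G P' e.1 ∧ P = insert e P')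
      = (Finset.univ.filter (fun P' : Finset (V × V) => IsRPath G P' e.1)).image (insert e) := by
    ext P
    simp only [Finset.mem_filter, Finset.mem_univ, true_and, Finset.mem_image]
    constructor
    · rintro ⟨P', h, rfl⟩; exact ⟨P', h, rfl⟩
    · rintro ⟨P', h, rfl⟩; exact ⟨P', h, rfl⟩
  rw [hfil, Finset.sum_image (by
    intro P₁ h₁ P₂ h₂ heq
    have h₁' : IsRPath G P₁ e.1 := by simpa using (Finset.mem_filter.1 h₁).2
    have h₂' : IsRPath G P₂ e.1 := by simpa using (Finset.mem_filter.1 h₂).2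
    rw [← Finset.erase_insert (hnot P₁ h₁'), ← Finset.erase_insert (hnot P₂ h₂'), heq])]
  have hrw : ∀ P' ∈ Finset.univ.filter (fun P' : Finset (V × V) => IsRPath G P' e.1),
      Y (edgeVars G (insert e P')) = Y (edgeVars G P' ∪ edgeVars G {e}) := by
    intro P' _
    rw [edgeVars_singleton G he, edgeVars_insert G he]
    congr 1
    rw [Finset.insert_eq, Finset.union_comm]
  rw [Finset.sum_congr rfl hrw]
  exact sum_paths_le_key G hY j e.1 hj (edgeVars G {e})
    (by rw [edgeVars_singleton G he, Finset.card_singleton]; omega)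
end
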